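/- arXiv:2002.08359 — 3 statements merged into one kernel-verified Lean document; each statement's English description precedes it below -/
import Mathlib

section
/- For every cardinal κ with 2 ≤ κ ≤ 2^ℵ₀, the real line can be partitioned into exactly κ pairwise homeomorphic Bernstein sets. -/
/-- A Bernstein set in ℝ: neither it nor its complement contains an uncountable closed set. -/
def IsBernsteinR (B : Set ℝ) : Prop :=
  ∀ F : Set ℝ, IsClosed F → ¬F.Countable → ¬F ⊆ B ∧ ¬F ⊆ Bᶜ

noncomputable section BernsteinAux

open Cardinal Set Function

namespace BernsteinAux

abbrev TT : Type := Cardinal.continuum.ord.ToType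

abbrev CUR := {F : Set ℝ // IsClosed F ∧ ¬F.Countable}

lemma mk_F_ge (F : Set ℝ) (hF : IsClosed F) (h : ¬F.Countable) : Cardinal.continuum ≤ #F := by
  obtain ⟨f, hr, -, hinj⟩ := hF.exists_nat_bool_injection_of_not_countable h
  have e : (ℕ → Bool) ↪ F :=
    ⟨fun g => ⟨f g, hr ⟨g, rfl⟩⟩, fun a b hab => hinj (congrArg Subtype.val hab)⟩
  calc Cardinal.continuum = #(ℕ → Bool) := by simp [Cardinal.mk_arrow]
    _ ≤ #F := Cardinal.mk_le_of_injective e.injective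

lemma mk_CUR_le : #CUR ≤ Cardinal.continuum := by
  have hinj : Function.Injective
      (fun F : CUR => {p : ℚ × ℚ | Set.Ioo (p.1 : ℝ) (p.2 : ℝ) ⊆ (F.1)ᶜ}) := by
    intro F G hFG
    simp only [Set.ext_iff, Set.mem_setOf_eq, Prod.forall] at hFG
    apply Subtype.ext
    rw [← compl_compl F.1, ← compl_compl G.1]
    congr 1
    ext x
    constructor
    · intro hx
      obtain ⟨v, hv, hxv, hvsub⟩ :=
        Real.isTopologicalBasis_Ioo_rat.exists_subset_of_mem_open hx F.2.1.isOpen_compl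
      simp only [Set.mem_iUnion, Set.mem_singleton_iff] at hv
      obtain ⟨a, b, -, rfl⟩ := hv
      exact ((hFG a b).mp hvsub) hxv
    · intro hx
      obtain ⟨v, hv, hxv, hvsub⟩ :=
        Real.isTopologicalBasis_Ioo_rat.exists_subset_of_mem_open hx G.2.1.isOpen_compl
      simp only [Set.mem_iUnion, Set.mem_singleton_iff] at hv
      obtain ⟨a, b, -, rfl⟩ := hv
      exact ((hFG a b).mpr hvsub) hxv
  calc #CUR ≤ #(Set (ℚ × ℚ)) := Cardinal.mk_le_of_injective hinj
    _ = 2 ^ #(ℚ × ℚ) := Cardinal.mk_set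
    _ = Cardinal.continuum := by simp [Cardinal.two_power_aleph0]

instance : Nonempty CUR := ⟨⟨Set.univ, isClosed_univ, Cardinal.not_countable_real⟩⟩

lemma span_subset_closure (s : Set ℝ) :
    (Submodule.span ℚ s : Set ℝ) ⊆ (Subfield.closure s : Set ℝ) := by
  intro x hx
  induction hx using Submodule.span_induction with
  | mem z hz => exact Subfield.subset_closure hz
  | zero => exact zero_mem _
  | add a b _ _ ha hb => exact add_mem ha hb
  | smul q a _ ha =>
      have hq : (q : ℝ) ∈ Subfield.closure s := SubfieldClass.ratCast_mem _ q
      simpa [Rat.smul_def] using mul_mem hq ha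

lemma exists_avoid (s : Set ℝ) (hs : #s < Cardinal.continuum) (F : Set ℝ)
    (hF : IsClosed F) (hunc : ¬F.Countable) :
    ∃ z ∈ F, z ∉ Subfield.closure s := by
  have hge : Cardinal.continuum ≤ #F := mk_F_ge F hF hunc
  by_contra hcon
  push_neg at hcon
  have hsub : F ⊆ (Subfield.closure s : Set ℝ) := hcon
  have h1 : #F ≤ #(Subfield.closure s : Set ℝ) := Cardinal.mk_le_mk_of_subset hsub
  have h2 : #(Subfield.closure s : Set ℝ) ≤ max #s Cardinal.aleph0 :=
    Subfield.cardinalMk_closure_le_max s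
  have h3 : Cardinal.continuum ≤ max #s Cardinal.aleph0 := le_trans hge (le_trans h1 h2)
  rcases max_cases #s Cardinal.aleph0 with ⟨h, _⟩ | ⟨h, _⟩
  · rw [h] at h3; exact absurd h3 (not_le.mpr hs)
  · rw [h] at h3; exact absurd h3 (not_le.mpr Cardinal.aleph0_lt_continuum)

lemma enum_exists : ∃ e : TT → CUR × ℝ, Surjective e := by
  have h : #(CUR × ℝ) ≤ Cardinal.continuum := by
    rw [Cardinal.mk_prod]
    simp only [Cardinal.lift_id]
    calc #CUR * #ℝ ≤ Cardinal.continuum * Cardinal.continuum := by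
          apply mul_le_mul' mk_CUR_le
          rw [Cardinal.mk_real]
      _ = Cardinal.continuum := Cardinal.mul_eq_self Cardinal.aleph0_le_continuum
  have h' : #(CUR × ℝ) ≤ #TT := by rwa [Cardinal.mk_ord_toType]
  obtain ⟨f⟩ := (Cardinal.le_def _ _).mp h'
  exact ⟨Function.invFun (f : CUR × ℝ → TT), Function.invFun_surjective f.injective⟩

def e : TT → CUR × ℝ := enum_exists.choose

lemma e_surj : Surjective e := enum_exists.choose_spec

lemma avoid (α : TT) (ih : ∀ β, β < α → ℝ) :
    ∃ z ∈ ((e α).1.1 : Set ℝ),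
      z ∉ Subfield.closure (Set.range fun β : Set.Iio α => ih β.1 β.2) := by
  apply exists_avoid
  · exact lt_of_le_of_lt Cardinal.mk_range_le (Cardinal.mk_Iio_ord_toType α)
  · exact (e α).1.2.1
  · exact (e α).1.2.2

def pick : TT → ℝ :=
  (IsWellFounded.wf (r := ((· < ·) : TT → TT → Prop))).fix
    (fun α ih => (avoid α ih).choose)

set_option maxHeartbeats 1000000 in
lemma pick_eq (α : TT) : pick α = (avoid α (fun β _ => pick β)).choose :=
  (IsWellFounded.wf (r := ((· < ·) : TT → TT → Prop))).fix_eq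
    (fun α ih => (avoid α ih).choose) α

set_option maxHeartbeats 1000000 in
lemma pick_spec (α : TT) : pick α ∈ ((e α).1.1 : Set ℝ) ∧
    pick α ∉ Subfield.closure (Set.range fun β : Set.Iio α => pick β.1) := by
  rw [pick_eq α]
  exact (avoid α (fun β _ => pick β)).choose_spec

lemma pick_not_mem_span (α : TT) :
    pick α ∉ Submodule.span ℚ (pick '' Set.Iio α) := by
  intro h
  apply (pick_spec α).2
  apply span_subset_closure
  rwa [Set.image_eq_range] at h

lemma pick_inj : Injective pick := by
  intro a b hab
  by_contra hne
  rcases lt_or_gt_of_ne hne with h | h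
  · exact pick_not_mem_span b
      (hab ▸ Submodule.subset_span (Set.mem_image_of_mem _ h))
  · exact pick_not_mem_span a
      (hab ▸ Submodule.subset_span (Set.mem_image_of_mem _ h))

lemma pick_li : LinearIndependent ℚ pick := by
  rw [linearIndependent_iff']
  intro s g hsum i hi
  by_contra hgne
  classical
  set s' := s.filter (fun j => g j ≠ 0) with hs'
  have hi' : i ∈ s' := Finset.mem_filter.mpr ⟨hi, hgne⟩
  have hne : s'.Nonempty := ⟨i, hi'⟩
  set α := s'.max' hne with hα
  have hαs' : α ∈ s' := s'.max'_mem hne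
  have hgα : g α ≠ 0 := (Finset.mem_filter.mp hαs').2
  have hsum' : ∑ j ∈ s', g j • pick j = 0 := by
    rw [hs', Finset.sum_filter_of_ne]
    · exact hsum
    · intro x _ hne0 hg0
      exact hne0 (by rw [hg0, zero_smul])
  have hsplit : g α • pick α + ∑ j ∈ s'.erase α, g j • pick j = 0 := by
    rw [← Finset.add_sum_erase s' (fun j => g j • pick j) hαs'] at hsum'
    exact hsum'
  have hrest : ∑ j ∈ s'.erase α, g j • pick j ∈ Submodule.span ℚ (pick '' Set.Iio α) := by
    apply Submodule.sum_mem
    intro j hj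
    have hjα : j < α := lt_of_le_of_ne (s'.le_max' j (Finset.mem_of_mem_erase hj))
      (Finset.ne_of_mem_erase hj)
    exact Submodule.smul_mem _ _ (Submodule.subset_span ⟨j, hjα, rfl⟩)
  have hmem : pick α ∈ Submodule.span ℚ (pick '' Set.Iio α) := by
    have h1 : g α • pick α = -∑ j ∈ s'.erase α, g j • pick j :=
      eq_neg_of_add_eq_zero_left hsplit
    have h2 : pick α = (g α)⁻¹ • (g α • pick α) := by
      rw [smul_smul, inv_mul_cancel₀ hgα, one_smul]
    rw [h2, h1]
    exact Submodule.smul_mem _ _ (Submodule.neg_mem _ hrest)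
  exact pick_not_mem_span α hmem

def SS : Set ℝ := Set.range pick

lemma li_SS : LinearIndepOn ℚ id SS := pick_li.linearIndepOn_id

def bS : Module.Basis (li_SS.extend (Set.subset_univ SS)) ℚ ℝ := Module.Basis.extend li_SS

open Classical in
def val : ℝ → ℝ := fun z => if h : ∃ α, pick α = z then (e h.choose).2 else 0

def φ : ℝ →ₗ[ℚ] ℝ := (bS.constr ℚ) (fun i => val i.1)

lemma φ_pick (α : TT) : φ (pick α) = (e α).2 := by
  have hmem : pick α ∈ li_SS.extend (Set.subset_univ SS) :=
    li_SS.subset_extend _ ⟨α, rfl⟩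
  have hb : pick α = bS ⟨pick α, hmem⟩ := (Module.Basis.extend_apply_self li_SS ⟨_, hmem⟩).symm
  rw [hb]
  show (bS.constr ℚ) (fun i => val i.1) (bS ⟨pick α, hmem⟩) = _
  rw [Module.Basis.constr_basis]
  show val (pick α) = _
  simp only [val]
  rw [dif_pos ⟨α, rfl⟩]
  have hch := (⟨α, rfl⟩ : ∃ β, pick β = pick α).choose_spec
  rw [pick_inj hch]

lemma phi_hits (F : Set ℝ) (hF : IsClosed F) (hc : ¬F.Countable) (y : ℝ) :
    ∃ z ∈ F, φ z = y := by
  obtain ⟨α, hα⟩ := e_surj ⟨⟨F, hF, hc⟩, y⟩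
  refine ⟨pick α, ?_, ?_⟩
  · have := (pick_spec α).1
    rw [hα] at this
    exact this
  · rw [φ_pick, hα]

lemma phi_surj : Surjective φ := by
  intro y
  obtain ⟨z, -, hz⟩ := phi_hits Set.univ isClosed_univ Cardinal.not_countable_real y
  exact ⟨z, hz⟩

lemma main_aux (ι : Type) [Nonempty ι] [Nontrivial ι] (g : ℝ → ι) (hg : Surjective g)
    (htr : ∀ i j : ι, ∃ r : ℝ, ∀ x : ℝ, g (x + r) = j ↔ g x = i) :
    ∃ P : Set (Set ℝ), Cardinal.mk P = #ι ∧ P.PairwiseDisjoint id ∧ ⋃₀ P = Set.univ ∧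
      (∀ B ∈ P, IsBernsteinR B) ∧ ∀ A ∈ P, ∀ B ∈ P, Nonempty (↥A ≃ₜ ↥B) := by
  set h : ℝ → ι := fun x => g (φ x) with hh
  have hsurj : Surjective h := by
    intro i
    obtain ⟨y, hy⟩ := hg i
    obtain ⟨z, hz⟩ := phi_surj y
    exact ⟨z, by rw [hh]; simp [hz, hy]⟩
  have hhits : ∀ (F : Set ℝ), IsClosed F → ¬F.Countable → ∀ i : ι, ∃ z ∈ F, h z = i := by
    intro F hF hc i
    obtain ⟨y, hy⟩ := hg i
    obtain ⟨z, hzF, hz⟩ := phi_hits F hF hc y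
    exact ⟨z, hzF, by rw [hh]; simp [hz, hy]⟩
  refine ⟨Set.range (fun i : ι => h ⁻¹' {i}), ?_, ?_, ?_, ?_, ?_⟩
  · have hinj : Injective (fun i : ι => h ⁻¹' {i}) := by
      intro i j hij
      obtain ⟨x, hx⟩ := hsurj i
      have hij' : h ⁻¹' {i} = h ⁻¹' {j} := hij
      simp only [Set.ext_iff, Set.mem_preimage, Set.mem_singleton_iff] at hij'
      rw [← hx]
      exact (hij' x).mp hx
    exact Cardinal.mk_range_eq _ hinj
  · rintro A ⟨i, rfl⟩ B ⟨j, rfl⟩ hAB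
    apply Set.disjoint_left.mpr
    intro x hxA hxB
    simp only [id_eq, Set.mem_preimage, Set.mem_singleton_iff] at hxA hxB
    exact hAB (by rw [show i = j from by rw [← hxA, ← hxB]])
  · ext x
    simp only [Set.mem_sUnion, Set.mem_range, Set.mem_univ, iff_true]
    exact ⟨h ⁻¹' {h x}, ⟨h x, rfl⟩, rfl⟩
  · rintro B ⟨i, rfl⟩ F hF hFc
    obtain ⟨j, hne⟩ := exists_ne i
    obtain ⟨z1, hz1F, hz1⟩ := hhits F hF hFc i
    obtain ⟨z2, hz2F, hz2⟩ := hhits F hF hFc j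
    constructor
    · intro hsub
      have := hsub hz2F
      rw [Set.mem_preimage, Set.mem_singleton_iff] at this
      exact hne (by rw [← this, hz2])
    · intro hsub
      exact (hsub hz1F) (by rw [Set.mem_preimage, Set.mem_singleton_iff]; exact hz1)
  · rintro A ⟨i, rfl⟩ B ⟨j, rfl⟩
    obtain ⟨r, hr⟩ := htr i j
    obtain ⟨s, hs⟩ := phi_surj r
    have key : ∀ x : ℝ, h (x + s) = j ↔ h x = i := by
      intro x
      rw [hh]
      simp only [map_add, hs]
      exact hr (φ x)
    have himg : (Homeomorph.addRight s) '' (h ⁻¹' {i}) = h ⁻¹' {j} := by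
      ext y
      constructor
      · rintro ⟨x, hx, rfl⟩
        rw [Set.mem_preimage, Set.mem_singleton_iff] at hx ⊢
        exact (key x).mpr hx
      · intro hy
        rw [Set.mem_preimage, Set.mem_singleton_iff] at hy
        refine ⟨y - s, ?_, by simp⟩
        rw [Set.mem_preimage, Set.mem_singleton_iff]
        exact (key (y - s)).mp (by rwa [sub_add_cancel])
    exact ⟨((Homeomorph.addRight s).image (h ⁻¹' {i})).trans (Homeomorph.setCongr himg)⟩

end BernsteinAux

end BernsteinAux

open Cardinal in
theorem partition_into_kappa_homeomorphic_bernstein_sets (κ : Cardinal)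
    (h2 : 2 ≤ κ) (hc : κ ≤ Cardinal.continuum) :
    ∃ P : Set (Set ℝ), Cardinal.mk P = κ ∧ P.PairwiseDisjoint id ∧ ⋃₀ P = Set.univ ∧
      (∀ B ∈ P, IsBernsteinR B) ∧
      ∀ A ∈ P, ∀ B ∈ P, Nonempty (↥A ≃ₜ ↥B) := by
  rcases lt_or_ge κ Cardinal.aleph0 with hfin | hinf
  · -- finite case: use ZMod n
    obtain ⟨n, rfl⟩ := Cardinal.lt_aleph0.mp hfin
    have hn2 : 2 ≤ n := by exact_mod_cast h2
    haveI : NeZero n := ⟨by omega⟩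
    haveI : Fact (1 < n) := ⟨by omega⟩
    set g : ℝ → ZMod n := fun x => ((⌊x⌋ : ℤ) : ZMod n) with hgdef
    have hgsurj : Function.Surjective g := by
      intro z
      obtain ⟨m, hm⟩ := ZMod.intCast_surjective z
      exact ⟨(m : ℝ), by rw [hgdef]; simp [Int.floor_intCast, hm]⟩
    have htr : ∀ i j : ZMod n, ∃ r : ℝ, ∀ x : ℝ, g (x + r) = j ↔ g x = i := by
      intro i j
      obtain ⟨c, hc⟩ := ZMod.intCast_surjective (j - i)
      refine ⟨(c : ℝ), fun x => ?_⟩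
      rw [hgdef]
      simp only
      rw [Int.floor_add_intCast, Int.cast_add, hc]
      constructor
      · intro hh
        have h2' := eq_sub_of_add_eq hh
        rwa [sub_sub_cancel] at h2'
      · intro hh
        rw [hh]
        ring
    obtain ⟨P, hP1, hP2, hP3, hP4, hP5⟩ := BernsteinAux.main_aux (ZMod n) g hgsurj htr
    refine ⟨P, ?_, hP2, hP3, hP4, hP5⟩
    rw [hP1, Cardinal.mk_fintype, ZMod.card]
  · -- infinite case
    haveI hne : Nonempty κ.ord.ToType := by
      rw [Ordinal.toType_nonempty_iff_ne_zero]
      simp only [ne_eq, Cardinal.ord_eq_zero]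
      intro hzero
      rw [hzero] at h2
      exact absurd (le_trans h2 le_rfl) (by simp)
    have hmkV : #(κ.ord.ToType →₀ ℚ) = κ := by
      rw [Cardinal.mk_finsupp_of_infinite', Cardinal.mk_ord_toType, Cardinal.mkRat]
      exact max_eq_left hinf
    set b := Module.Basis.ofVectorSpace ℚ ℝ with hbdef
    have hrepr : #ℝ = #(Module.Basis.ofVectorSpaceIndex ℚ ℝ →₀ ℚ) := Cardinal.mk_congr b.repr.toEquiv
    haveI hneidx : Nonempty (Module.Basis.ofVectorSpaceIndex ℚ ℝ) := by
      by_contra hemp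
      rw [not_nonempty_iff] at hemp
      have h1 : #(Module.Basis.ofVectorSpaceIndex ℚ ℝ →₀ ℚ) = 1 := Cardinal.mk_eq_one _
      rw [h1, Cardinal.mk_real] at hrepr
      exact absurd hrepr (ne_of_gt (lt_trans Cardinal.one_lt_aleph0 Cardinal.aleph0_lt_continuum))
    have hmax : max #(Module.Basis.ofVectorSpaceIndex ℚ ℝ) Cardinal.aleph0 = Cardinal.continuum := by
      rw [← Cardinal.mkRat, ← Cardinal.mk_finsupp_of_infinite' _ ℚ, ← hrepr, Cardinal.mk_real]
    have hidx : κ ≤ #(Module.Basis.ofVectorSpaceIndex ℚ ℝ) := by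
      rcases max_cases #(Module.Basis.ofVectorSpaceIndex ℚ ℝ) Cardinal.aleph0 with ⟨hm, _⟩ | ⟨hm, _⟩
      · rw [hm] at hmax; rw [hmax]; exact hc
      · rw [hm] at hmax
        exact absurd hmax (ne_of_lt Cardinal.aleph0_lt_continuum)
    have hVle : #(κ.ord.ToType →₀ ℚ) ≤ #(Module.Basis.ofVectorSpaceIndex ℚ ℝ) := by
      rw [hmkV]; exact hidx
    obtain ⟨f⟩ := (Cardinal.le_def _ _).mp hVle
    set σ : Module.Basis.ofVectorSpaceIndex ℚ ℝ → (κ.ord.ToType →₀ ℚ) :=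
      Function.invFun (f : (κ.ord.ToType →₀ ℚ) → Module.Basis.ofVectorSpaceIndex ℚ ℝ) with hσdef
    have hσ : Function.Surjective σ := Function.invFun_surjective f.injective
    set ψ : ℝ →ₗ[ℚ] (κ.ord.ToType →₀ ℚ) := (b.constr ℚ) σ with hψdef
    have hψsurj : Function.Surjective ψ := by
      intro v
      obtain ⟨i, hi⟩ := hσ v
      exact ⟨b i, by rw [hψdef, Module.Basis.constr_basis]; exact hi⟩
    have htr : ∀ i j : (κ.ord.ToType →₀ ℚ), ∃ r : ℝ, ∀ x : ℝ, ψ (x + r) = j ↔ ψ x = i := by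
      intro i j
      obtain ⟨r, hr⟩ := hψsurj (j - i)
      refine ⟨r, fun x => ?_⟩
      rw [map_add, hr]
      constructor
      · intro hh
        have h2' := eq_sub_of_add_eq hh
        rwa [sub_sub_cancel] at h2'
      · intro hh
        rw [hh]
        abel
    obtain ⟨P, hP1, hP2, hP3, hP4, hP5⟩ :=
      BernsteinAux.main_aux (κ.ord.ToType →₀ ℚ) ψ hψsurj htr
    exact ⟨P, by rw [hP1, hmkV], hP2, hP3, hP4, hP5⟩
end

section
/- For every cardinal κ with 2 ≤ κ ≤ 2^ℵ₀, the real line can be partitioned into exactly κ mutually non-homeomorphic Bernstein sets. -/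
open Set Cardinal Topology TopologicalSpace
attribute [local instance] Classical.propDecidable

noncomputable section BernsteinConstruction


lemma mk_closeds_le (X : Type) [TopologicalSpace X] [SecondCountableTopology X] :
    #{F : Set X // IsClosed F} ≤ Cardinal.continuum := by
  have hb := TopologicalSpace.isBasis_countableBasis X
  have hcount : (TopologicalSpace.countableBasis X).Countable :=
    TopologicalSpace.countable_countableBasis X
  have hinj : Function.Injective
      (fun F : {F : Set X // IsClosed F} =>
        ({s : ↥(TopologicalSpace.countableBasis X) | (s : Set X) ⊆ (F : Set X)ᶜ} :
          Set ↥(TopologicalSpace.countableBasis X))) := by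
    intro F G h
    have key : ∀ (F : {F : Set X // IsClosed F}),
        (F : Set X)ᶜ = ⋃₀ {s ∈ TopologicalSpace.countableBasis X | s ⊆ (F : Set X)ᶜ} := by
      intro F
      exact hb.open_eq_sUnion' F.2.isOpen_compl
    have hss : {s ∈ TopologicalSpace.countableBasis X | s ⊆ (F : Set X)ᶜ}
        = {s ∈ TopologicalSpace.countableBasis X | s ⊆ (G : Set X)ᶜ} := by
      ext s
      simp only [Set.mem_setOf_eq, Set.mem_sep_iff]
      constructor
      · rintro ⟨hs, hsub⟩
        exact ⟨hs, (Set.ext_iff.1 h ⟨s, hs⟩).1 hsub⟩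
      · rintro ⟨hs, hsub⟩
        exact ⟨hs, (Set.ext_iff.1 h ⟨s, hs⟩).2 hsub⟩
    apply Subtype.ext
    have : (F : Set X)ᶜ = (G : Set X)ᶜ := by rw [key F, key G, hss]
    simpa using congrArg compl this
  calc #{F : Set X // IsClosed F} ≤ #(Set ↥(TopologicalSpace.countableBasis X)) :=
        Cardinal.mk_le_of_injective hinj
    _ = 2 ^ #↥(TopologicalSpace.countableBasis X) := by simp [Cardinal.mk_set]
    _ ≤ 2 ^ Cardinal.aleph0 := by
        apply Cardinal.power_le_power_left (by norm_num)
        exact Cardinal.mk_le_aleph0_iff.2 hcount.to_subtype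
    _ = Cardinal.continuum := Cardinal.two_power_aleph0

lemma continuum_le_mk_closed {X : Type} [TopologicalSpace X] [PolishSpace X] {F : Set X}
    (hF : IsClosed F) (hunc : ¬F.Countable) : Cardinal.continuum ≤ #F := by
  obtain ⟨f, hrange, -, hinj⟩ := hF.exists_nat_bool_injection_of_not_countable hunc
  have : #(ℕ → Bool) ≤ #F := by
    refine ⟨⟨fun x => ⟨f x, hrange (Set.mem_range_self x)⟩, ?_⟩⟩
    intro a b h
    exact hinj (congrArg Subtype.val h)
  simpa [Cardinal.mk_arrow] using this

lemma countable_not_cond {X : Type} [TopologicalSpace X] [SecondCountableTopology X] (T : Set X) :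
    (T \ {t ∈ T | ∀ U : Set X, IsOpen U → t ∈ U → ¬(T ∩ U).Countable}).Countable := by
  classical
  set S : Set (Set X) := {s ∈ TopologicalSpace.countableBasis X | (T ∩ s).Countable} with hS
  have hScount : S.Countable := (TopologicalSpace.countable_countableBasis X).mono (by
    intro s hs; exact hs.1)
  have hsub : (T \ {t ∈ T | ∀ U : Set X, IsOpen U → t ∈ U → ¬(T ∩ U).Countable})
      ⊆ ⋃ s ∈ S, T ∩ s := by
    rintro t ⟨htT, ht⟩
    simp only [Set.mem_setOf_eq, not_and, not_forall] at ht
    obtain ⟨U, hUopen, htU, hcnt⟩ := ht htT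
    push_neg at hcnt
    obtain ⟨s, hsmem, hts, hsU⟩ :=
      (TopologicalSpace.isBasis_countableBasis X).exists_subset_of_mem_open htU hUopen
    have : s ∈ S := ⟨hsmem, hcnt.mono (by intro z hz; exact ⟨hz.1, hsU hz.2⟩)⟩
    exact Set.mem_biUnion this ⟨htT, hts⟩
  exact (Set.Countable.biUnion hScount (fun s hs => hs.2)).mono hsub

lemma exists_compact_uncountable {X : Type} [MetricSpace X] [ProperSpace X] {F : Set X}
    (hF : IsClosed F) (hFu : ¬F.Countable) :
    ∃ K, K ⊆ F ∧ IsCompact K ∧ ¬K.Countable := by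
  have hne : F.Nonempty := by
    rcases Set.eq_empty_or_nonempty F with h | h
    · exact absurd (h ▸ Set.countable_empty) hFu
    · exact h
  obtain ⟨z₀, hz₀⟩ := hne
  by_contra hcon
  push_neg at hcon
  apply hFu
  have hcover : F = ⋃ n : ℕ, F ∩ Metric.closedBall z₀ n := by
    ext z
    simp only [Set.mem_iUnion, Set.mem_inter_iff, Metric.mem_closedBall]
    constructor
    · intro hz
      obtain ⟨n, hn⟩ := exists_nat_ge (dist z z₀)
      exact ⟨n, hz, hn⟩
    · rintro ⟨n, hz, -⟩
      exact hz
  rw [hcover]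
  apply Set.countable_iUnion
  intro n
  by_contra hK
  exact hK (hcon _ Set.inter_subset_left
    ((isCompact_closedBall z₀ n).inter_left hF))

lemma exists_closed_unc_diff {V : Set ℝ} (hV : IsClosed V) (hVu : ¬V.Countable)
    {s : Set ℝ} (hs : s.Subsingleton) :
    ∃ F, F ⊆ V \ s ∧ IsClosed F ∧ ¬F.Countable := by
  rcases Set.eq_empty_or_nonempty s with h | ⟨v, hv⟩
  · exact ⟨V, by simp [h], hV, hVu⟩
  have hseq : s = {v} := hs.eq_singleton_of_mem hv
  subst hseq
  by_contra hcon
  push_neg at hcon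
  apply hVu
  have hcover : V ⊆ {v} ∪ ⋃ n : ℕ, V ∩ {y | 1/(n+1 : ℝ) ≤ dist y v} := by
    intro z hz
    by_cases hzv : z = v
    · exact Set.mem_union_left _ (by simp [hzv])
    · right
      have hd : 0 < dist z v := dist_pos.2 hzv
      obtain ⟨n, hn⟩ := exists_nat_one_div_lt hd
      refine Set.mem_iUnion.2 ⟨n, hz, ?_⟩
      show 1/(n+1 : ℝ) ≤ dist z v
      have : 1/((n:ℝ)+1) < dist z v := by exact_mod_cast hn
      linarith
  apply Set.Countable.mono hcover
  apply Set.Countable.union (Set.countable_singleton v)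
  apply Set.countable_iUnion
  intro n
  by_contra hK
  refine hK (hcon _ ?_ ?_)
  · intro z hz
    refine ⟨hz.1, ?_⟩
    simp only [Set.mem_singleton_iff]
    intro hzv
    rw [hzv] at hz
    have h2 : 1/(n+1 : ℝ) ≤ dist v v := hz.2
    rw [dist_self] at h2
    have : (0:ℝ) < 1/(n+1 : ℝ) := by positivity
    linarith
  · exact hV.inter (isClosed_le continuous_const (Continuous.dist continuous_id continuous_const))

lemma diff_nonempty_of_mk_lt {X : Type} {S T : Set X} (h : #T < #S) : (S \ T).Nonempty := by
  rw [Set.nonempty_iff_ne_empty]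
  intro hempty
  have hsub : S ⊆ T := by
    intro x hx
    by_contra hxT
    exact (Set.eq_empty_iff_forall_notMem.1 hempty x) ⟨hx, hxT⟩
  exact absurd (Cardinal.mk_le_mk_of_subset hsub) (not_le.2 h)

lemma split_lemma {X : Type} [MetricSpace X] [SecondCountableTopology X]
    {p : X → ℝ} (hp : Continuous p) {T : Set X}
    (hTc : IsCompact T) (hTu : ¬T.Countable)
    (hfib : ∀ y : ℝ, (T ∩ p ⁻¹' {y}).Countable) {ε : ℝ} (hε : 0 < ε) :
    ∃ q : Set X × Set X, q.1 ⊆ T ∧ q.2 ⊆ T ∧ IsCompact q.1 ∧ IsCompact q.2 ∧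
      ¬q.1.Countable ∧ ¬q.2.Countable ∧ Metric.diam q.1 ≤ ε ∧ Metric.diam q.2 ≤ ε ∧
      ∀ u ∈ q.1, ∀ v ∈ q.2, p u ≠ p v := by
  classical
  set T' : Set X := {t ∈ T | ∀ U : Set X, IsOpen U → t ∈ U → ¬(T ∩ U).Countable} with hT'
  have hT'u : ¬T'.Countable := by
    intro h
    exact hTu (((countable_not_cond T).union h).mono (by
      intro t ht
      by_cases h' : t ∈ T'
      · exact Set.mem_union_right _ h'
      · exact Set.mem_union_left _ ⟨ht, h'⟩))
  have hT'T : T' ⊆ T := fun t ht => ht.1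
  -- two condensation points with distinct p values
  have h2 : ∃ t₀ ∈ T', ∃ t₁ ∈ T', p t₀ ≠ p t₁ := by
    by_contra hcon
    push_neg at hcon
    have hne : T'.Nonempty := by
      rcases Set.eq_empty_or_nonempty T' with h | h
      · exact absurd (h ▸ Set.countable_empty) hT'u
      · exact h
    obtain ⟨t, ht⟩ := hne
    have : T' ⊆ T ∩ p ⁻¹' {p t} := by
      intro s hs
      exact ⟨hs.1, by simpa using hcon s hs t ht⟩
    exact hT'u ((hfib (p t)).mono this)
  obtain ⟨t₀, ht₀, t₁, ht₁, hne⟩ := h2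
  set r : ℝ := dist (p t₀) (p t₁) with hr
  have hrpos : 0 < r := dist_pos.2 hne
  obtain ⟨δ₀, hδ₀pos, hδ₀⟩ := Metric.continuous_iff.1 hp t₀ (r/2) (by positivity)
  obtain ⟨δ₁, hδ₁pos, hδ₁⟩ := Metric.continuous_iff.1 hp t₁ (r/2) (by positivity)
  set δ : ℝ := min (min δ₀ δ₁) ε / 2 with hδ
  have hδpos : 0 < δ := by positivity
  have hδlt₀ : δ < δ₀ := by
    have h1 : min (min δ₀ δ₁) ε ≤ δ₀ := le_trans (min_le_left _ _) (min_le_left _ _)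
    nlinarith
  have hδlt₁ : δ < δ₁ := by
    have h1 : min (min δ₀ δ₁) ε ≤ δ₁ := le_trans (min_le_left _ _) (min_le_right _ _)
    nlinarith
  have hδε : 2 * δ ≤ ε := by
    have h1 : min (min δ₀ δ₁) ε ≤ ε := min_le_right _ _
    nlinarith
  refine ⟨(T ∩ Metric.closedBall t₀ δ, T ∩ Metric.closedBall t₁ δ), inter_subset_left,
    inter_subset_left, hTc.inter_right Metric.isClosed_closedBall, hTc.inter_right Metric.isClosed_closedBall,
    ?_, ?_, ?_, ?_, ?_⟩
  · intro h
    exact ht₀.2 (Metric.ball t₀ δ) Metric.isOpen_ball (Metric.mem_ball_self hδpos)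
      (h.mono (Set.inter_subset_inter_right _ Metric.ball_subset_closedBall))
  · intro h
    exact ht₁.2 (Metric.ball t₁ δ) Metric.isOpen_ball (Metric.mem_ball_self hδpos)
      (h.mono (Set.inter_subset_inter_right _ Metric.ball_subset_closedBall))
  · calc Metric.diam (T ∩ Metric.closedBall t₀ δ) ≤ Metric.diam (Metric.closedBall t₀ δ) :=
        Metric.diam_mono inter_subset_right Metric.isBounded_closedBall
      _ ≤ 2 * δ := Metric.diam_closedBall hδpos.le
      _ ≤ ε := hδε
  · calc Metric.diam (T ∩ Metric.closedBall t₁ δ) ≤ Metric.diam (Metric.closedBall t₁ δ) :=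
        Metric.diam_mono inter_subset_right Metric.isBounded_closedBall
      _ ≤ 2 * δ := Metric.diam_closedBall hδpos.le
      _ ≤ ε := hδε
  · rintro u ⟨-, hu⟩ v ⟨-, hv⟩ hpq
    have h0 : dist (p u) (p t₀) < r / 2 := hδ₀ u (lt_of_le_of_lt (Metric.mem_closedBall.1 hu) hδlt₀)
    have h1 : dist (p v) (p t₁) < r / 2 := hδ₁ v (lt_of_le_of_lt (Metric.mem_closedBall.1 hv) hδlt₁)
    have htri : dist (p t₀) (p t₁) ≤ dist (p t₀) (p u) + dist (p u) (p t₁) := dist_triangle _ _ _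
    have htri2 : dist (p u) (p t₁) = dist (p v) (p t₁) := by rw [hpq]
    rw [dist_comm (p t₀) (p u)] at htri
    nlinarith [hrpos]

noncomputable def nodeAux {X : Type} (S : Set X) (step : Set X → ℝ → Set X × Set X) :
    List Bool → Set X
  | [] => S
  | b :: w => if b then (step (nodeAux S step w) ((1/2 : ℝ)^(w.length+1))).2
      else (step (nodeAux S step w) ((1/2 : ℝ)^(w.length+1))).1

def branchList (x : ℕ → Bool) : ℕ → List Bool
  | 0 => []
  | n+1 => x n :: branchList x n

lemma branchList_length (x : ℕ → Bool) (n : ℕ) : (branchList x n).length = n := by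
  induction n with
  | zero => rfl
  | succ n ih => simp [branchList, ih]

lemma branchList_congr {x x' : ℕ → Bool} (n : ℕ) (h : ∀ i, i < n → x i = x' i) :
    branchList x n = branchList x' n := by
  induction n with
  | zero => rfl
  | succ n ih =>
      simp only [branchList]
      rw [h n (Nat.lt_succ_self n), ih (fun i hi => h i (Nat.lt_succ_of_lt hi))]

lemma dichotomy {X : Type} [MetricSpace X] [SecondCountableTopology X] {S : Set X}
    (hS : IsCompact S) (hSu : ¬S.Countable) {p : X → ℝ} (hp : Continuous p) :
    (∃ y : ℝ, ¬(S ∩ p ⁻¹' {y}).Countable) ∨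
      ∃ C, C ⊆ S ∧ IsCompact C ∧ ¬C.Countable ∧ Set.InjOn p C := by
  classical
  by_cases hfib : ∃ y : ℝ, ¬(S ∩ p ⁻¹' {y}).Countable
  · exact Or.inl hfib
  push_neg at hfib
  right
  set step : Set X → ℝ → Set X × Set X := fun T ε =>
    if h : IsCompact T ∧ ¬T.Countable ∧ T ⊆ S ∧ 0 < ε then
      Classical.choose (split_lemma hp h.1 h.2.1
        (fun y => (hfib y).mono (Set.inter_subset_inter_left _ h.2.2.1)) h.2.2.2)
    else (∅, ∅) with hstepdef
  set node : List Bool → Set X := nodeAux S step with hnode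
  have hnodeEq : ∀ (w : List Bool) (b : Bool), node (b :: w) =
      (if b then (step (node w) ((1/2 : ℝ)^(w.length+1))).2
        else (step (node w) ((1/2 : ℝ)^(w.length+1))).1) := by
    intro w b
    cases b <;> simp [hnode, nodeAux]
  -- goodness invariant
  have hGood : ∀ w : List Bool, IsCompact (node w) ∧ ¬(node w).Countable ∧ node w ⊆ S := by
    intro w
    induction w with
    | nil => exact ⟨hS, hSu, le_refl _⟩
    | cons b w ih =>
        have hcond : IsCompact (node w) ∧ ¬(node w).Countable ∧ node w ⊆ S ∧
            (0:ℝ) < (1/2 : ℝ)^(w.length+1) := ⟨ih.1, ih.2.1, ih.2.2, by positivity⟩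
        have hspec := Classical.choose_spec (split_lemma hp hcond.1 hcond.2.1
          (fun y => (hfib y).mono (Set.inter_subset_inter_left _ hcond.2.2.1)) hcond.2.2.2)
        have hq : step (node w) ((1/2 : ℝ)^(w.length+1)) = Classical.choose (split_lemma hp
            hcond.1 hcond.2.1
            (fun y => (hfib y).mono (Set.inter_subset_inter_left _ hcond.2.2.1)) hcond.2.2.2) :=
          dif_pos hcond
        rw [hnodeEq w b]
        cases b
        · simp only [if_neg Bool.false_ne_true, hq]
          exact ⟨hspec.2.2.1, hspec.2.2.2.2.1, hspec.1.trans ih.2.2⟩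
        · simp only [if_pos rfl, hq]
          exact ⟨hspec.2.2.2.1, hspec.2.2.2.2.2.1, hspec.2.1.trans ih.2.2⟩
  -- child spec
  have hchild : ∀ w : List Bool,
      node (false :: w) ⊆ node w ∧ node (true :: w) ⊆ node w ∧
      Metric.diam (node (false :: w)) ≤ (1/2:ℝ)^(w.length+1) ∧
      Metric.diam (node (true :: w)) ≤ (1/2:ℝ)^(w.length+1) ∧
      ∀ u ∈ node (false :: w), ∀ v ∈ node (true :: w), p u ≠ p v := by
    intro w
    have ih := hGood w
    have hcond : IsCompact (node w) ∧ ¬(node w).Countable ∧ node w ⊆ S ∧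
        (0:ℝ) < (1/2 : ℝ)^(w.length+1) := ⟨ih.1, ih.2.1, ih.2.2, by positivity⟩
    have hspec := Classical.choose_spec (split_lemma hp hcond.1 hcond.2.1
      (fun y => (hfib y).mono (Set.inter_subset_inter_left _ hcond.2.2.1)) hcond.2.2.2)
    have hq : step (node w) ((1/2 : ℝ)^(w.length+1)) = Classical.choose (split_lemma hp
        hcond.1 hcond.2.1
        (fun y => (hfib y).mono (Set.inter_subset_inter_left _ hcond.2.2.1)) hcond.2.2.2) :=
      dif_pos hcond
    rw [hnodeEq w false, hnodeEq w true]
    simp only [if_neg Bool.false_ne_true, if_pos rfl, hq]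
    exact ⟨hspec.1, hspec.2.1, hspec.2.2.2.2.2.2.1, hspec.2.2.2.2.2.2.2.1,
      hspec.2.2.2.2.2.2.2.2⟩
  have hstep2 : ∀ (w : List Bool) (b : Bool), node (b :: w) ⊆ node w ∧
      Metric.diam (node (b::w)) ≤ (1/2:ℝ)^(w.length+1) := by
    intro w b
    cases b
    · exact ⟨(hchild w).1, (hchild w).2.2.1⟩
    · exact ⟨(hchild w).2.1, (hchild w).2.2.2.1⟩
  have hbl_succ : ∀ (x : ℕ → Bool) (n : ℕ), branchList x (n+1) = x n :: branchList x n :=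
    fun x n => rfl
  have hKdec : ∀ (x : ℕ → Bool) (n : ℕ),
      node (branchList x (n+1)) ⊆ node (branchList x n) := by
    intro x n
    rw [hbl_succ]
    exact (hstep2 (branchList x n) (x n)).1
  have hKdiam : ∀ (x : ℕ → Bool) (n : ℕ),
      Metric.diam (node (branchList x (n+1))) ≤ (1/2:ℝ)^(n+1) := by
    intro x n
    rw [hbl_succ]
    have := (hstep2 (branchList x n) (x n)).2
    rwa [branchList_length] at this
  have hnonem : ∀ w : List Bool, (node w).Nonempty := by
    intro w
    rcases Set.eq_empty_or_nonempty (node w) with h | h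
    · exact absurd (h ▸ Set.countable_empty) (hGood w).2.1
    · exact h
  have hiInter : ∀ x : ℕ → Bool, (⋂ n, node (branchList x n)).Nonempty := by
    intro x
    exact IsCompact.nonempty_iInter_of_sequence_nonempty_isCompact_isClosed _
      (hKdec x) (fun n => hnonem _) (hGood _).1 (fun n => (hGood _).1.isClosed)
  set φ : (ℕ → Bool) → X := fun x => (hiInter x).some with hφ
  have hφmem : ∀ (x : ℕ → Bool) (n : ℕ), φ x ∈ node (branchList x n) := by
    intro x n
    exact Set.mem_iInter.1 (hiInter x).some_mem n
  have hsep' : ∀ x x' : ℕ → Bool, x ≠ x' → p (φ x) ≠ p (φ x') := by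
    intro x x' hxx
    have hex : ∃ i, x i ≠ x' i := by
      by_contra h
      push_neg at h
      exact hxx (funext h)
    set n := Nat.find hex with hnn
    have hn : x n ≠ x' n := Nat.find_spec hex
    have hlt : ∀ i, i < n → x i = x' i := by
      intro i hi
      have := Nat.find_min hex hi
      simpa using this
    have hbl : branchList x n = branchList x' n := branchList_congr n hlt
    have h1 : φ x ∈ node (x n :: branchList x n) := by
      rw [← hbl_succ]
      exact hφmem x (n+1)
    have h2 : φ x' ∈ node (x' n :: branchList x n) := by
      rw [hbl, ← hbl_succ]
      exact hφmem x' (n+1)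
    cases hb : x n
    · have hb' : x' n = true := by
        cases hb2 : x' n
        · rw [hb, hb2] at hn
          exact absurd rfl hn
        · rfl
      rw [hb] at h1
      rw [hb'] at h2
      exact (hchild (branchList x n)).2.2.2.2 _ h1 _ h2
    · have hb' : x' n = false := by
        cases hb2 : x' n
        · rfl
        · rw [hb, hb2] at hn
          exact absurd rfl hn
      rw [hb] at h1
      rw [hb'] at h2
      exact ((hchild (branchList x n)).2.2.2.2 _ h2 _ h1).symm
  have hφinj : Function.Injective φ := by
    intro a b hab
    by_contra hne
    exact hsep' a b hne (by rw [hab])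
  have hφcont : Continuous φ := by
    rw [continuous_iff_continuousAt]
    intro x
    apply Metric.tendsto_nhds.2
    intro ε hε
    obtain ⟨n, hn⟩ := exists_pow_lt_of_lt_one hε (by norm_num : (1/2:ℝ) < 1)
    have hNopen : IsOpen {x' : ℕ → Bool | ∀ i, i < n + 1 → x' i = x i} := by
      have heq : {x' : ℕ → Bool | ∀ i, i < n+1 → x' i = x i}
          = ⋂ i ∈ Finset.range (n+1), (fun x' : ℕ → Bool => x' i) ⁻¹' {x i} := by
        ext x'
        simp [Finset.mem_range]
      rw [heq]
      exact isOpen_biInter_finset (fun i _ => (isOpen_discrete _).preimage (continuous_apply i))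
    apply Filter.eventually_of_mem (hNopen.mem_nhds (by intro i _; rfl))
    intro x' hx'
    have hbl : branchList x' (n+1) = branchList x (n+1) :=
      branchList_congr (n+1) (fun i hi => hx' i hi)
    have h1 : φ x' ∈ node (branchList x (n+1)) := by
      rw [← hbl]
      exact hφmem x' (n+1)
    have h2 : φ x ∈ node (branchList x (n+1)) := hφmem x (n+1)
    have hb : dist (φ x') (φ x) ≤ (1/2:ℝ)^(n+1) :=
      le_trans (Metric.dist_le_diam_of_mem (hGood _).1.isBounded h1 h2) (hKdiam x n)
    calc dist (φ x') (φ x) ≤ (1/2:ℝ)^(n+1) := hb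
      _ ≤ (1/2:ℝ)^n := by
          apply pow_le_pow_of_le_one (by norm_num) (by norm_num)
          omega
      _ < ε := hn
  have hmkNB : #(ℕ → Bool) = Cardinal.continuum := by simp [Cardinal.mk_arrow]
  refine ⟨Set.range φ, ?_, isCompact_range hφcont, ?_, ?_⟩
  · rintro _ ⟨x, rfl⟩
    exact (hGood (branchList x 0)).2.2 (hφmem x 0)
  · intro h
    have hc1 : Countable ↥(Set.range φ) := h.to_subtype
    have hc2 : Countable (ℕ → Bool) := Countable.of_equiv _ (Equiv.ofInjective φ hφinj).symm
    have h3 : #(ℕ → Bool) ≤ Cardinal.aleph0 := Cardinal.mk_le_aleph0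
    rw [hmkNB] at h3
    exact absurd h3 Cardinal.aleph0_lt_continuum.not_ge
  · rintro _ ⟨a, rfl⟩ _ ⟨b, rfl⟩ hpe
    have : a = b := by
      by_contra hne
      exact hsep' a b hne hpe
    rw [this]

section Graph
variable {A B : Set ℝ} (e : ↥A ≃ₜ ↥B)

def graphSet (e : ↥A ≃ₜ ↥B) : Set (ℝ × ℝ) := Set.range (fun a : ↥A => ((a : ℝ), (e a : ℝ)))

lemma graph_fiber_fst {x y : ℝ} (hz : (x, y) ∈ closure (graphSet e)) (hx : x ∈ A) :
    y = (e ⟨x, hx⟩ : ℝ) := by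
  obtain ⟨u, hu, hlim⟩ := mem_closure_iff_seq_limit.1 hz
  choose a ha using hu
  have h1 : Filter.Tendsto (fun n => ((a n : ℝ))) Filter.atTop (𝓝 x) := by
    have h := (Continuous.tendsto continuous_fst (x, y)).comp hlim
    exact Filter.Tendsto.congr (fun n => by simp only [Function.comp_apply, ← ha n]) h
  have h2 : Filter.Tendsto (fun n => ((e (a n) : ℝ))) Filter.atTop (𝓝 y) := by
    have h := (Continuous.tendsto continuous_snd (x, y)).comp hlim
    exact Filter.Tendsto.congr (fun n => by simp only [Function.comp_apply, ← ha n]) h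
  have h1' : Filter.Tendsto a Filter.atTop (𝓝 (⟨x, hx⟩ : ↥A)) := by
    rw [tendsto_subtype_rng]
    exact h1
  have h2' : Filter.Tendsto (fun n => ((e (a n) : ℝ))) Filter.atTop (𝓝 (e ⟨x, hx⟩ : ℝ)) := by
    have hc : Continuous (fun z : ↥A => ((e z : ℝ))) := continuous_subtype_val.comp e.continuous
    exact (hc.tendsto _).comp h1'
  exact tendsto_nhds_unique h2 h2'

lemma graph_fiber_snd {x y : ℝ} (hz : (x, y) ∈ closure (graphSet e)) (hy : y ∈ B) :
    x = (e.symm ⟨y, hy⟩ : ℝ) := by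
  obtain ⟨u, hu, hlim⟩ := mem_closure_iff_seq_limit.1 hz
  choose a ha using hu
  have h1 : Filter.Tendsto (fun n => ((a n : ℝ))) Filter.atTop (𝓝 x) := by
    have h := (Continuous.tendsto continuous_fst (x, y)).comp hlim
    exact Filter.Tendsto.congr (fun n => by simp only [Function.comp_apply, ← ha n]) h
  have h2 : Filter.Tendsto (fun n => ((e (a n) : ℝ))) Filter.atTop (𝓝 y) := by
    have h := (Continuous.tendsto continuous_snd (x, y)).comp hlim
    exact Filter.Tendsto.congr (fun n => by simp only [Function.comp_apply, ← ha n]) h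
  have h2' : Filter.Tendsto (fun n => e (a n)) Filter.atTop (𝓝 (⟨y, hy⟩ : ↥B)) := by
    rw [tendsto_subtype_rng]
    exact h2
  have h1' : Filter.Tendsto (fun n => ((e.symm (e (a n)) : ℝ))) Filter.atTop
      (𝓝 (e.symm ⟨y, hy⟩ : ℝ)) := by
    have hc : Continuous (fun z : ↥B => ((e.symm z : ℝ))) :=
      continuous_subtype_val.comp e.symm.continuous
    exact (hc.tendsto _).comp h2'
  simp only [Homeomorph.symm_apply_apply] at h1'
  exact tendsto_nhds_unique h1 h1'

end Graph

abbrev OT : Type := (Cardinal.continuum.ord).ToType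

def TA (I : Type) : Type := {q : Set ℝ × I // IsClosed q.1 ∧ ¬q.1.Countable}
def TB (I : Type) : Type := {q : Set (ℝ × ℝ) × I //
  IsCompact q.1 ∧ ¬q.1.Countable ∧ Set.InjOn Prod.fst q.1 ∧ Set.InjOn Prod.snd q.1}

variable {I : Type}

noncomputable def pickA (F : Set ℝ) (i : I) (U : Set ℝ) : Set (ℝ × I) :=
  if h : (F \ U).Nonempty then {(h.some, i)} else ∅

noncomputable def pickB (C : Set (ℝ × ℝ)) (i : I) (U : Set ℝ) : Set (ℝ × I) :=
  if h : (C \ (Prod.fst ⁻¹' U ∪ Prod.snd ⁻¹' U)).Nonempty then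
    {(h.some.1, i), (h.some.2, i)} else ∅

noncomputable def taskPick : TA I ⊕ TB I → Set ℝ → Set (ℝ × I)
  | Sum.inl q => fun U => pickA q.1.1 q.1.2 U
  | Sum.inr q => fun U => pickB q.1.1 q.1.2 U

def colorOf : TA I ⊕ TB I → I
  | Sum.inl q => q.1.2
  | Sum.inr q => q.1.2

lemma taskPick_fresh (t : TA I ⊕ TB I) (U : Set ℝ) :
    ∀ z ∈ taskPick t U, (z : ℝ × I).1 ∉ U := by
  rintro ⟨x, i⟩ hz
  cases t with
  | inl q =>
      simp only [taskPick, pickA] at hz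
      split at hz
      · next h =>
          simp only [Set.mem_singleton_iff, Prod.mk.injEq] at hz
          exact fun hU => h.some_mem.2 (hz.1 ▸ hU)
      · exact absurd hz (Set.notMem_empty _)
  | inr q =>
      simp only [taskPick, pickB] at hz
      split at hz
      · next h =>
          have hmem := h.some_mem
          simp only [Set.mem_insert_iff, Set.mem_singleton_iff, Prod.mk.injEq] at hz
          rcases hz with ⟨h1, -⟩ | ⟨h1, -⟩
          · intro hU
            exact hmem.2 (Set.mem_union_left _ (by simpa [h1] using hU))
          · intro hU
            exact hmem.2 (Set.mem_union_right _ (by simpa [h1] using hU))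
      · exact absurd hz (Set.notMem_empty _)

lemma taskPick_color (t : TA I ⊕ TB I) (U : Set ℝ) :
    ∀ z ∈ taskPick t U, (z : ℝ × I).2 = colorOf t := by
  rintro ⟨x, i⟩ hz
  cases t with
  | inl q =>
      simp only [taskPick, pickA] at hz
      split at hz
      · simp only [Set.mem_singleton_iff, Prod.mk.injEq] at hz
        exact hz.2 ▸ rfl
      · exact absurd hz (Set.notMem_empty _)
  | inr q =>
      simp only [taskPick, pickB] at hz
      split at hz
      · simp only [Set.mem_insert_iff, Set.mem_singleton_iff, Prod.mk.injEq] at hz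
        rcases hz with ⟨-, h2⟩ | ⟨-, h2⟩ <;> exact h2 ▸ rfl
      · exact absurd hz (Set.notMem_empty _)

lemma taskPick_finite (t : TA I ⊕ TB I) (U : Set ℝ) : (taskPick t U).Finite := by
  cases t with
  | inl q =>
      simp only [taskPick, pickA]
      split
      · exact Set.finite_singleton _
      · exact Set.finite_empty
  | inr q =>
      simp only [taskPick, pickB]
      split
      · exact (Set.finite_singleton _).insert _
      · exact Set.finite_empty

noncomputable def assignAt (e : TA I ⊕ TB I ↪ OT) : OT → Set (ℝ × I) :=
  (IsWellFounded.wf (α := OT) (r := (· < ·))).fix (fun o ih =>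
    if h : ∃ t, e t = o then
      taskPick h.choose (Prod.fst '' ⋃ b : {b : OT // b < o}, ih b b.2)
    else ∅)

noncomputable def usedPts (e : TA I ⊕ TB I ↪ OT) (o : OT) : Set ℝ :=
  Prod.fst '' ⋃ b : {b : OT // b < o}, assignAt e b

lemma assignAt_eq (e : TA I ⊕ TB I ↪ OT) (o : OT) : assignAt e o =
    if h : ∃ t, e t = o then taskPick h.choose (usedPts e o) else ∅ := by
  rw [assignAt, WellFounded.fix_eq]
  rfl

lemma mk_usedPts_lt (e : TA I ⊕ TB I ↪ OT) (o : OT) :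
    #(usedPts e o) < Cardinal.continuum := by
  have h1 : #(usedPts e o) ≤ #(⋃ b : {b : OT // b < o}, assignAt e b) :=
    Cardinal.mk_image_le
  have h2 : #(⋃ b : {b : OT // b < o}, assignAt e b) ≤
      #{b : OT // b < o} * Cardinal.aleph0 := by
    refine le_trans (Cardinal.mk_iUnion_le _) ?_
    apply mul_le_mul' le_rfl
    apply ciSup_le'
    intro b
    have hfin : (assignAt e b.1).Finite := by
      rw [assignAt_eq]
      split
      · exact taskPick_finite _ _
      · exact Set.finite_empty
    exact Cardinal.mk_le_aleph0_iff.2 hfin.countable.to_subtype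
  have h3 : #{b : OT // b < o} < Cardinal.continuum := Cardinal.mk_Iio_ord_toType o
  exact lt_of_le_of_lt (h1.trans h2)
    (Cardinal.mul_lt_of_lt Cardinal.aleph0_le_continuum h3 Cardinal.aleph0_lt_continuum)

noncomputable def assigned (e : TA I ⊕ TB I ↪ OT) : Set (ℝ × I) := ⋃ o, assignAt e o

lemma assignAt_fresh (e : TA I ⊕ TB I ↪ OT) (o : OT) :
    ∀ z ∈ assignAt e o, (z : ℝ × I).1 ∉ usedPts e o := by
  intro z hz
  rw [assignAt_eq] at hz
  split at hz
  · exact taskPick_fresh _ _ z hz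
  · exact absurd hz (Set.notMem_empty _)

lemma assignAt_subset_used {e : TA I ⊕ TB I ↪ OT} {b o : OT} (h : b < o) :
    ∀ z ∈ assignAt e b, (z : ℝ × I).1 ∈ usedPts e o := by
  intro z hz
  exact ⟨z, Set.mem_iUnion.2 ⟨⟨b, h⟩, hz⟩, rfl⟩

lemma color_unique (e : TA I ⊕ TB I ↪ OT) {x : ℝ} {i j : I}
    (hi : (x, i) ∈ assigned e) (hj : (x, j) ∈ assigned e) : i = j := by
  obtain ⟨o, ho⟩ := Set.mem_iUnion.1 hi
  obtain ⟨o', ho'⟩ := Set.mem_iUnion.1 hj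
  rcases lt_trichotomy o o' with h | h | h
  · exact absurd (assignAt_subset_used h (x, i) ho) (assignAt_fresh e o' (x, j) ho')
  · subst h
    rw [assignAt_eq] at ho ho'
    by_cases hex : ∃ t, e t = o
    · rw [dif_pos hex] at ho ho'
      have e1 : i = colorOf hex.choose := taskPick_color _ _ (x, i) ho
      have e2 : j = colorOf hex.choose := taskPick_color _ _ (x, j) ho'
      rw [e1, e2]
    · rw [dif_neg hex] at ho
      exact absurd ho (Set.notMem_empty _)
  · exact absurd (assignAt_subset_used h (x, j) ho') (assignAt_fresh e o (x, i) ho)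

lemma choose_task_eq (e : TA I ⊕ TB I ↪ OT) (t : TA I ⊕ TB I)
    (h : ∃ t', e t' = e t) : h.choose = t := e.injective h.choose_spec

lemma taskA_success (e : TA I ⊕ TB I ↪ OT) (q : TA I)
    (hbig : Cardinal.continuum ≤ #(q.1.1)) :
    ∃ x ∈ q.1.1, (x, q.1.2) ∈ assigned e := by
  set o : OT := e (Sum.inl q) with ho
  have hex : ∃ t', e t' = o := ⟨Sum.inl q, rfl⟩
  have heq : assignAt e o = taskPick (Sum.inl q) (usedPts e o) := by
    rw [assignAt_eq]
    rw [dif_pos hex, choose_task_eq e (Sum.inl q) hex]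
  have hne : (q.1.1 \ usedPts e o).Nonempty :=
    diff_nonempty_of_mk_lt (lt_of_lt_of_le (mk_usedPts_lt e o) hbig)
  have : taskPick (Sum.inl q) (usedPts e o) = {(hne.some, q.1.2)} := by
    simp only [taskPick, pickA, dif_pos hne]
  refine ⟨hne.some, hne.some_mem.1, ?_⟩
  apply Set.mem_iUnion.2 ⟨o, ?_⟩
  rw [heq, this]
  rfl

lemma taskB_success (e : TA I ⊕ TB I ↪ OT) (q : TB I)
    (hbig : Cardinal.continuum ≤ #(q.1.1)) :
    ∃ z ∈ q.1.1, ((z : ℝ × ℝ).1, q.1.2) ∈ assigned e ∧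
      ((z : ℝ × ℝ).2, q.1.2) ∈ assigned e := by
  set o : OT := e (Sum.inr q) with ho
  have hex : ∃ t', e t' = o := ⟨Sum.inr q, rfl⟩
  have heq : assignAt e o = taskPick (Sum.inr q) (usedPts e o) := by
    rw [assignAt_eq]
    rw [dif_pos hex, choose_task_eq e (Sum.inr q) hex]
  set U := usedPts e o with hU
  have hUlt : #U < Cardinal.continuum := mk_usedPts_lt e o
  have hbad : #(q.1.1 ∩ (Prod.fst ⁻¹' U ∪ Prod.snd ⁻¹' U) : Set (ℝ × ℝ)) <
      Cardinal.continuum := by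
    have hsplit : (q.1.1 ∩ (Prod.fst ⁻¹' U ∪ Prod.snd ⁻¹' U) : Set (ℝ × ℝ)) ⊆
        (q.1.1 ∩ Prod.fst ⁻¹' U) ∪ (q.1.1 ∩ Prod.snd ⁻¹' U) := by
      rintro z ⟨hzC, hz⟩
      rcases hz with h | h
      · exact Or.inl ⟨hzC, h⟩
      · exact Or.inr ⟨hzC, h⟩
    have h1 : #(q.1.1 ∩ Prod.fst ⁻¹' U : Set (ℝ × ℝ)) ≤ #U := by
      refine Cardinal.mk_le_of_injective (f := fun z =>
        (⟨(z : ℝ × ℝ).1, z.2.2⟩ : ↥U)) ?_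
      rintro ⟨z, hz⟩ ⟨z', hz'⟩ hzz
      have : (z : ℝ × ℝ).1 = (z' : ℝ × ℝ).1 := congrArg Subtype.val hzz
      exact Subtype.ext (q.2.2.2.1 hz.1 hz'.1 this)
    have h2 : #(q.1.1 ∩ Prod.snd ⁻¹' U : Set (ℝ × ℝ)) ≤ #U := by
      refine Cardinal.mk_le_of_injective (f := fun z =>
        (⟨(z : ℝ × ℝ).2, z.2.2⟩ : ↥U)) ?_
      rintro ⟨z, hz⟩ ⟨z', hz'⟩ hzz
      have : (z : ℝ × ℝ).2 = (z' : ℝ × ℝ).2 := congrArg Subtype.val hzz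
      exact Subtype.ext (q.2.2.2.2 hz.1 hz'.1 this)
    calc #(q.1.1 ∩ (Prod.fst ⁻¹' U ∪ Prod.snd ⁻¹' U) : Set (ℝ × ℝ))
        ≤ #((q.1.1 ∩ Prod.fst ⁻¹' U) ∪ (q.1.1 ∩ Prod.snd ⁻¹' U) : Set (ℝ × ℝ)) :=
          Cardinal.mk_le_mk_of_subset hsplit
      _ ≤ #(q.1.1 ∩ Prod.fst ⁻¹' U : Set (ℝ × ℝ)) +
          #(q.1.1 ∩ Prod.snd ⁻¹' U : Set (ℝ × ℝ)) := Cardinal.mk_union_le _ _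
      _ ≤ #U + #U := add_le_add h1 h2
      _ < Cardinal.continuum := Cardinal.add_lt_of_lt Cardinal.aleph0_le_continuum hUlt hUlt
  have hne : (q.1.1 \ (Prod.fst ⁻¹' U ∪ Prod.snd ⁻¹' U)).Nonempty := by
    have : (q.1.1 \ (q.1.1 ∩ (Prod.fst ⁻¹' U ∪ Prod.snd ⁻¹' U))).Nonempty :=
      diff_nonempty_of_mk_lt (lt_of_lt_of_le hbad hbig)
    obtain ⟨z, hz1, hz2⟩ := this
    exact ⟨z, hz1, fun h => hz2 ⟨hz1, h⟩⟩
  have hpick : taskPick (Sum.inr q) U = {(hne.some.1, q.1.2), (hne.some.2, q.1.2)} := by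
    simp only [taskPick, pickB, dif_pos hne]
  refine ⟨hne.some, hne.some_mem.1, ?_, ?_⟩
  · apply Set.mem_iUnion.2 ⟨o, ?_⟩
    rw [heq, hpick]
    exact Set.mem_insert _ _
  · apply Set.mem_iUnion.2 ⟨o, ?_⟩
    rw [heq, hpick]
    exact Set.mem_insert_iff.2 (Or.inr rfl)


lemma mk_tasks_le (I : Type) (hI : #I ≤ Cardinal.continuum) :
    #(TA I ⊕ TB I) ≤ Cardinal.continuum := by
  have hA : #(TA I) ≤ Cardinal.continuum := by
    have hinj : Function.Injective (fun q : TA I =>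
        ((⟨q.1.1, q.2.1⟩ : {F : Set ℝ // IsClosed F}), q.1.2)) := by
      rintro ⟨⟨F, i⟩, hq⟩ ⟨⟨F', i'⟩, hq'⟩ h
      simp only [Prod.mk.injEq, Subtype.mk.injEq] at h
      exact Subtype.ext (Prod.ext_iff.2 ⟨h.1, h.2⟩)
    calc #(TA I) ≤ #({F : Set ℝ // IsClosed F} × I) := Cardinal.mk_le_of_injective hinj
      _ = #{F : Set ℝ // IsClosed F} * #I := by simp
      _ ≤ Cardinal.continuum * Cardinal.continuum := mul_le_mul' (mk_closeds_le ℝ) hI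
      _ = Cardinal.continuum := Cardinal.mul_eq_self Cardinal.aleph0_le_continuum
  have hB : #(TB I) ≤ Cardinal.continuum := by
    have hinj : Function.Injective (fun q : TB I =>
        ((⟨q.1.1, q.2.1.isClosed⟩ : {F : Set (ℝ × ℝ) // IsClosed F}), q.1.2)) := by
      rintro ⟨⟨F, i⟩, hq⟩ ⟨⟨F', i'⟩, hq'⟩ h
      simp only [Prod.mk.injEq, Subtype.mk.injEq] at h
      exact Subtype.ext (Prod.ext_iff.2 ⟨h.1, h.2⟩)
    calc #(TB I) ≤ #({F : Set (ℝ × ℝ) // IsClosed F} × I) := Cardinal.mk_le_of_injective hinj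
      _ = #{F : Set (ℝ × ℝ) // IsClosed F} * #I := by simp
      _ ≤ Cardinal.continuum * Cardinal.continuum := mul_le_mul' (mk_closeds_le (ℝ × ℝ)) hI
      _ = Cardinal.continuum := Cardinal.mul_eq_self Cardinal.aleph0_le_continuum
  calc #(TA I ⊕ TB I) = #(TA I) + #(TB I) := by simp
    _ ≤ Cardinal.continuum + Cardinal.continuum := add_le_add hA hB
    _ = Cardinal.continuum := Cardinal.add_eq_self Cardinal.aleph0_le_continuum

end BernsteinConstruction


theorem partition_into_kappa_nonhomeomorphic_bernstein_sets (κ : Cardinal)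
    (h2 : 2 ≤ κ) (hc : κ ≤ Cardinal.continuum) :
    ∃ P : Set (Set ℝ), Cardinal.mk P = κ ∧ P.PairwiseDisjoint id ∧ ⋃₀ P = Set.univ ∧
      (∀ B ∈ P, IsBernsteinR B) ∧
      ∀ A ∈ P, ∀ B ∈ P, A ≠ B → IsEmpty (↥A ≃ₜ ↥B) := by
  classical
  set I : Type := κ.out with hIdef
  have hmkI : #I = κ := Cardinal.mk_out κ
  have hI2 : (2 : Cardinal) ≤ #I := by rw [hmkI]; exact h2
  have hIc : #I ≤ Cardinal.continuum := by rw [hmkI]; exact hc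
  have hIne : Nonempty I := by
    apply Cardinal.mk_ne_zero_iff.1
    intro h0
    rw [h0] at hI2
    exact absurd hI2 (by norm_num)
  obtain ⟨e⟩ : Nonempty (TA I ⊕ TB I ↪ OT) := by
    apply (Cardinal.le_def _ _).1
    rw [show #OT = Cardinal.continuum from Cardinal.mk_ord_toType _]
    exact mk_tasks_le I hIc
  set col : ℝ → I := fun x =>
    if h : ∃ i, (x, i) ∈ assigned e then h.choose else hIne.some with hcoldef
  have hcol_eq : ∀ {x : ℝ} {i : I}, (x, i) ∈ assigned e → col x = i := by
    intro x i h
    have hex : ∃ j, (x, j) ∈ assigned e := ⟨i, h⟩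
    have h1 : col x = hex.choose := by simp only [hcoldef, dif_pos hex]
    rw [h1]
    exact color_unique e hex.choose_spec h
  set B : I → Set ℝ := fun i => {x | col x = i} with hBdef
  -- K1 : every closed uncountable set meets every color class
  have K1 : ∀ F : Set ℝ, IsClosed F → ¬F.Countable → ∀ i : I, ∃ x ∈ F, x ∈ B i := by
    intro F hF hFu i
    obtain ⟨x, hxF, hx⟩ := taskA_success e ⟨(F, i), hF, hFu⟩ (continuum_le_mk_closed hF hFu)
    exact ⟨x, hxF, hcol_eq hx⟩
  -- K2 : each color class is uncountable
  have K2 : ∀ i : I, ¬(B i).Countable := by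
    intro i hcnt
    have hms : MeasurableSet (Set.Icc (0:ℝ) 1 \ B i) :=
      measurableSet_Icc.diff hcnt.measurableSet
    have hvol : MeasureTheory.volume (Set.Icc (0:ℝ) 1 \ B i) = 1 := by
      rw [MeasureTheory.measure_diff_null (hcnt.measure_zero _)]
      simp [Real.volume_Icc]
    obtain ⟨K, hKsub, hKc, hKlt⟩ := hms.exists_isCompact_lt_add
      (by rw [hvol]; exact ENNReal.one_ne_top) (ε := 1) (by norm_num)
    have hKunc : ¬K.Countable := by
      intro hKcnt
      rw [hvol, hKcnt.measure_zero _, zero_add] at hKlt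
      exact lt_irrefl _ hKlt
    obtain ⟨x, hxK, hxB⟩ := K1 K hKc.isClosed hKunc i
    exact (hKsub hxK).2 hxB
  -- K3 : each color class is a Bernstein set
  have K3 : ∀ i : I, IsBernsteinR (B i) := by
    intro i F hF hFu
    constructor
    · obtain ⟨j, hj⟩ := (Cardinal.two_le_iff' i).1 hI2
      obtain ⟨x, hxF, hxB⟩ := K1 F hF hFu j
      intro hsub
      exact hj (by rw [show j = col x from hxB.symm, hsub hxF])
    · obtain ⟨x, hxF, hxB⟩ := K1 F hF hFu i
      intro hsub
      exact (hsub hxF) hxB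
  -- K4 : distinct color classes are non-homeomorphic
  have K4 : ∀ a b : I, a ≠ b → IsEmpty (↥(B a) ≃ₜ ↥(B b)) := by
    intro a b hab
    constructor
    intro e'
    have hfstG : Prod.fst '' graphSet e' = B a := by
      ext x
      constructor
      · rintro ⟨z, ⟨w, rfl⟩, rfl⟩
        exact w.2
      · intro hx
        exact ⟨(x, (e' ⟨x, hx⟩ : ℝ)), ⟨⟨x, hx⟩, rfl⟩, rfl⟩
    have hGu : ¬(graphSet e').Countable := fun h => K2 a (hfstG ▸ h.image Prod.fst)
    have hclu : ¬(closure (graphSet e')).Countable := fun h => hGu (h.mono subset_closure)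
    obtain ⟨C₀, hC₀sub, hC₀c, hC₀u⟩ := exists_compact_uncountable isClosed_closure hclu
    rcases dichotomy hC₀c hC₀u continuous_fst with ⟨x₀, hfib⟩ | ⟨C₁, hC₁sub, hC₁c, hC₁u, hC₁inj⟩
    · set D : Set (ℝ × ℝ) := C₀ ∩ Prod.fst ⁻¹' {x₀} with hD
      set V : Set ℝ := Prod.snd '' D with hV
      have hDc : IsCompact D := hC₀c.inter_right (isClosed_singleton.preimage continuous_fst)
      have hVc : IsCompact V := hDc.image continuous_snd
      have hVu : ¬V.Countable := by
        intro h
        apply hfib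
        refine Set.countable_of_injective_of_countable_image (f := Prod.snd) ?_ h
        intro z hz z' hz' hzz
        have hl1 : z.1 = x₀ := hz.2
        have hl2 : z'.1 = x₀ := hz'.2
        exact Prod.ext_iff.2 ⟨hl1.trans hl2.symm, hzz⟩
      have hsub2 : (V ∩ B b).Subsingleton := by
        intro y hy y' hy'
        obtain ⟨z, hzD, hzy⟩ := hy.1
        obtain ⟨z', hzD', hzy'⟩ := hy'.1
        have hmem : (x₀, y) ∈ closure (graphSet e') := by
          have hz : z = (x₀, y) := Prod.ext_iff.2 ⟨hzD.2, hzy⟩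
          exact hz ▸ hC₀sub hzD.1
        have hmem' : (x₀, y') ∈ closure (graphSet e') := by
          have hz : z' = (x₀, y') := Prod.ext_iff.2 ⟨hzD'.2, hzy'⟩
          exact hz ▸ hC₀sub hzD'.1
        have h1 := graph_fiber_snd e' hmem hy.2
        have h2 := graph_fiber_snd e' hmem' hy'.2
        have h3 : e'.symm ⟨y, hy.2⟩ = e'.symm ⟨y', hy'.2⟩ := Subtype.ext (h1.symm.trans h2)
        exact congrArg Subtype.val (e'.symm.injective h3)
      obtain ⟨F, hFsub, hFcl, hFu⟩ := exists_closed_unc_diff hVc.isClosed hVu hsub2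
      obtain ⟨x, hxF, hxB⟩ := K1 F hFcl hFu b
      have hxV := hFsub hxF
      exact hxV.2 ⟨hxV.1, hxB⟩
    · rcases dichotomy hC₁c hC₁u continuous_snd with ⟨y₀, hfib⟩ | ⟨C, hCsub, hCc, hCu, hCinj⟩
      · set D : Set (ℝ × ℝ) := C₁ ∩ Prod.snd ⁻¹' {y₀} with hD
        set H : Set ℝ := Prod.fst '' D with hH
        have hDc : IsCompact D := hC₁c.inter_right (isClosed_singleton.preimage continuous_snd)
        have hHc : IsCompact H := hDc.image continuous_fst
        have hHu : ¬H.Countable := by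
          intro h
          apply hfib
          refine Set.countable_of_injective_of_countable_image (f := Prod.fst) ?_ h
          intro z hz z' hz' hzz
          have hl1 : z.2 = y₀ := hz.2
          have hl2 : z'.2 = y₀ := hz'.2
          exact Prod.ext_iff.2 ⟨hzz, hl1.trans hl2.symm⟩
        have hsub2 : (H ∩ B a).Subsingleton := by
          intro x hx x' hx'
          obtain ⟨z, hzD, hzx⟩ := hx.1
          obtain ⟨z', hzD', hzx'⟩ := hx'.1
          have hmem : (x, y₀) ∈ closure (graphSet e') := by
            have hz : z = (x, y₀) := Prod.ext_iff.2 ⟨hzx, hzD.2⟩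
            exact hz ▸ hC₀sub (hC₁sub hzD.1)
          have hmem' : (x', y₀) ∈ closure (graphSet e') := by
            have hz : z' = (x', y₀) := Prod.ext_iff.2 ⟨hzx', hzD'.2⟩
            exact hz ▸ hC₀sub (hC₁sub hzD'.1)
          have h1 := graph_fiber_fst e' hmem hx.2
          have h2 := graph_fiber_fst e' hmem' hx'.2
          have h3 : e' ⟨x, hx.2⟩ = e' ⟨x', hx'.2⟩ := Subtype.ext (h1.symm.trans h2)
          exact congrArg Subtype.val (e'.injective h3)
        obtain ⟨F, hFsub, hFcl, hFu⟩ := exists_closed_unc_diff hHc.isClosed hHu hsub2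
        obtain ⟨x, hxF, hxB⟩ := K1 F hFcl hFu a
        have hxH := hFsub hxF
        exact hxH.2 ⟨hxH.1, hxB⟩
      · have hfstinj : Set.InjOn Prod.fst C := hC₁inj.mono hCsub
        have hbig : Cardinal.continuum ≤ #C := continuum_le_mk_closed hCc.isClosed hCu
        obtain ⟨z, hzC, h1, h2⟩ := taskB_success e ⟨(C, a), hCc, hCu, hfstinj, hCinj⟩ hbig
        have hz1 : z.1 ∈ B a := hcol_eq h1
        have hzcl : (z.1, z.2) ∈ closure (graphSet e') := by
          have := hC₀sub (hC₁sub (hCsub hzC))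
          simpa using this
        have h3 : z.2 = (e' ⟨z.1, hz1⟩ : ℝ) := graph_fiber_fst e' hzcl hz1
        have h4 : z.2 ∈ B b := h3 ▸ (e' ⟨z.1, hz1⟩).2
        have h5 : col z.2 = a := hcol_eq h2
        exact hab (h5.symm.trans h4)
  -- K5 : B is injective
  have K5 : Function.Injective B := by
    intro i j hij
    have hIccU : ¬(Set.Icc (0:ℝ) 1).Countable := by
      intro h
      have := h.measure_zero (MeasureTheory.volume)
      rw [Real.volume_Icc] at this
      norm_num at this
    obtain ⟨x, -, hxB⟩ := K1 (Set.Icc 0 1) isClosed_Icc hIccU i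
    have hxB' : x ∈ B j := hij ▸ hxB
    exact hxB.symm.trans hxB'
  refine ⟨Set.range B, ?_, ?_, ?_, ?_, ?_⟩
  · rw [Cardinal.mk_range_eq B K5, hmkI]
  · rintro A₁ ⟨i, rfl⟩ A₂ ⟨j, rfl⟩ hne
    apply Set.disjoint_left.2
    intro x hx hx'
    exact hne (by rw [show i = j from hx.symm.trans hx'])
  · ext x
    simp only [Set.mem_sUnion, Set.mem_univ, iff_true]
    exact ⟨B (col x), Set.mem_range_self _, rfl⟩
  · rintro A ⟨i, rfl⟩
    exact K3 i
  · rintro A₁ ⟨i, rfl⟩ A₂ ⟨j, rfl⟩ hne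
    exact K4 i j (fun h => hne (by rw [h]))
end

section
/- Let P be an uncountable Polish abelian topological group with only countably many elements of finite order (or the Cantor group), κ an infinite cardinal with 2^κ > 2^ℵ₀, and L a translation-invariant σ-ideal such that every nonempty open set contains a member of L of size κ. Then P can be partitioned into 2^ℵ₀ mutually non-homeomorphic κ-dense sets all lying in L. -/
/-- The discrete topology on `ZMod 3`. -/
instance : TopologicalSpace (ZMod 3) := ⊥

/-- The Cantor group: countable power of the 3-element group, with the product topology. -/
abbrev CantorGroup : Type := ℕ → ZMod 3

/-- `S` is `κ`-dense: it meets every nonempty open set in exactly `κ` points. -/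
def IsKappaDense {P : Type*} [TopologicalSpace P] (κ : Cardinal) (S : Set P) : Prop :=
  ∀ U : Set P, IsOpen U → U.Nonempty → Cardinal.mk ↥(S ∩ U) = κ

open Cardinal Set

section Helpers

universe u
variable {α : Type u}

/-- Generic transfinite recursion with choice along a well-order. -/
lemma recChoice {ι : Type*} {σ : Type*} [LinearOrder ι] [WellFoundedLT ι]
    (C : ∀ i : ι, ((Set.Iio i) → σ) → Set σ)
    (hC : ∀ i g, (C i g).Nonempty) :
    ∃ f : ι → σ, ∀ i : ι, f i ∈ C i (fun j => f j) := by
  let F : ι → σ := WellFounded.fix (wellFounded_lt)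
    (fun i rec => (hC i (fun j => rec j j.2)).choose)
  refine ⟨F, fun i => ?_⟩
  have h := WellFounded.fix_eq (wellFounded_lt (α := ι))
    (fun i (rec : ∀ j, j < i → σ) => (hC i (fun j => rec j j.2)).choose) i
  show F i ∈ _
  rw [show F i = (hC i (fun j : Set.Iio i => F j)).choose from h]
  exact (hC i _).choose_spec

lemma exists_mem_diff_of_mk_lt {S V : Set α} (h : #V < #S) : (S \ V).Nonempty := by
  rw [Set.nonempty_iff_ne_empty]
  intro he
  have : S ⊆ V := fun x hx => by
    by_contra hxv
    exact absurd (show x ∈ S \ V from ⟨hx, hxv⟩) (by rw [he]; exact fun h => h)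
  exact absurd (Cardinal.mk_le_mk_of_subset this) (not_le.mpr h)

lemma mk_diff_eq_of_mk_lt {S V : Set α} (hS : Cardinal.aleph0 ≤ #S) (h : #V < #S) :
    #(S \ V : Set α) = #S := by
  refine le_antisymm (Cardinal.mk_le_mk_of_subset (Set.diff_subset)) ?_
  by_contra hlt
  push_neg at hlt
  have h1 : S ⊆ (S \ V) ∪ (S ∩ V) := by
    intro x hx
    by_cases hxv : x ∈ V
    · exact Or.inr ⟨hx, hxv⟩
    · exact Or.inl ⟨hx, hxv⟩
  have h2 : #S ≤ #(S \ V : Set α) + #(S ∩ V : Set α) :=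
    (Cardinal.mk_le_mk_of_subset h1).trans (Cardinal.mk_union_le _ _)
  have h3 : #(S ∩ V : Set α) < #S :=
    lt_of_le_of_lt (Cardinal.mk_le_mk_of_subset Set.inter_subset_right) h
  exact absurd h2 (not_le.mpr (Cardinal.add_lt_of_lt hS hlt h3))

lemma exists_not_mem_of_mk_lt {S : Set α} (h : #S < #α) : ∃ x, x ∉ S := by
  obtain ⟨x, -, hx⟩ := exists_mem_diff_of_mk_lt (S := (Set.univ : Set α)) (by simpa using h)
  exact ⟨x, hx⟩

lemma two_le_continuum' : (2 : Cardinal.{u}) ≤ Cardinal.continuum.{u} :=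
  le_trans (by exact_mod_cast (Cardinal.nat_lt_aleph0 2).le) Cardinal.aleph0_le_continuum

lemma mk_le_continuum_of_secondCountable (P : Type u) [TopologicalSpace P] [T2Space P]
    [SecondCountableTopology P] : #P ≤ Cardinal.continuum.{u} := by
  classical
  have hbasis := TopologicalSpace.isBasis_countableBasis P
  have hcount : (TopologicalSpace.countableBasis P).Countable :=
    TopologicalSpace.countable_countableBasis P
  have : Countable ↥(TopologicalSpace.countableBasis P) := hcount
  let f : P → Set ↥(TopologicalSpace.countableBasis P) := fun x => {b | x ∈ (b : Set P)}
  have hf : Function.Injective f := by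
    intro x y hxy
    by_contra hne
    obtain ⟨U, V, hU, hV, hxU, hyV, hUV⟩ := t2_separation hne
    obtain ⟨b, hb, hxb, hbU⟩ := hbasis.exists_subset_of_mem_open hxU hU
    have : (⟨b, hb⟩ : ↥(TopologicalSpace.countableBasis P)) ∈ f y := by rw [← hxy]; exact hxb
    exact absurd (hbU this) (fun h => Set.disjoint_left.mp hUV h hyV)
  calc #P ≤ #(Set ↥(TopologicalSpace.countableBasis P)) := Cardinal.mk_le_of_injective hf
    _ = 2 ^ #↥(TopologicalSpace.countableBasis P) := Cardinal.mk_set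
    _ ≤ 2 ^ Cardinal.aleph0.{u} :=
        Cardinal.power_le_power_left (by norm_num) Cardinal.mk_le_aleph0
    _ = _ := Cardinal.two_power_aleph0

lemma continuum_le_mk_of_uncountable (P : Type u) [TopologicalSpace P] [PolishSpace P]
    [Uncountable P] : Cardinal.continuum.{u} ≤ #P := by
  obtain ⟨f, -, -, hf⟩ := isClosed_univ.exists_nat_bool_injection_of_not_countable
    (by rw [Set.countable_univ_iff]; exact not_countable (α := P))
  have : #(ULift.{u} (ℕ → Bool)) ≤ #P :=
    Cardinal.mk_le_of_injective (f := fun x => f (Equiv.ulift x)) (hf.comp Equiv.ulift.injective)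
  simpa [Cardinal.mk_uLift, Cardinal.mk_arrow, Cardinal.lift_continuum] using this

lemma mk_homeo_class_le (P : Type u) [TopologicalSpace P] [T2Space P]
    [SecondCountableTopology P] (hP : #P ≤ Cardinal.continuum.{u}) (Q : Set P) :
    #{B : Set P | Nonempty (↥Q ≃ₜ ↥B)} ≤ Cardinal.continuum.{u} := by
  classical
  obtain ⟨s, hsc, hsd⟩ := TopologicalSpace.exists_countable_dense ↥Q
  have : Countable ↥s := hsc
  let Φ : {B : Set P // Nonempty (↥Q ≃ₜ ↥B)} → (↥s → P) := fun B j =>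
    ((B.2.some (j : ↥Q)) : P)
  have hrange : ∀ B : {B : Set P // Nonempty (↥Q ≃ₜ ↥B)},
      Set.range (fun q : ↥Q => ((B.2.some q : ↥(B : Set P)) : P)) = (B : Set P) := by
    intro B
    ext z
    constructor
    · rintro ⟨q, rfl⟩; exact (B.2.some q).2
    · intro hz; exact ⟨B.2.some.symm ⟨z, hz⟩, by simp⟩
  have hΦ : Function.Injective Φ := by
    intro B B' h
    have hfg : (fun q : ↥Q => ((B.2.some q : ↥(B : Set P)) : P)) =
        (fun q : ↥Q => ((B'.2.some q : ↥(B' : Set P)) : P)) := by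
      refine Continuous.ext_on hsd ?_ ?_ ?_
      · exact continuous_subtype_val.comp (B.2.some).continuous
      · exact continuous_subtype_val.comp (B'.2.some).continuous
      · intro q hq
        exact congrFun h ⟨q, hq⟩
    apply Subtype.ext
    rw [← hrange B, ← hrange B', hfg]
  calc #{B : Set P | Nonempty (↥Q ≃ₜ ↥B)} ≤ #(↥s → P) := Cardinal.mk_le_of_injective hΦ
    _ = #P ^ #↥s := by rw [Cardinal.mk_arrow]; simp
    _ ≤ Cardinal.continuum.{u} ^ Cardinal.aleph0.{u} := by
        apply (Cardinal.power_le_power_right hP).trans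
        exact Cardinal.power_le_power_left Cardinal.continuum_ne_zero Cardinal.mk_le_aleph0
    _ = _ := Cardinal.power_aleph0_of_le_continuum two_le_continuum' le_rfl

lemma isKappaDense_translate {P : Type u} [TopologicalSpace P] [AddCommGroup P]
    [IsTopologicalAddGroup P] {κ : Cardinal} {D : Set P} (hD : IsKappaDense κ D) (t : P) :
    IsKappaDense κ ((fun z => t + z) '' D) := by
  intro U hU hne
  have key : ((fun z => t + z) '' D) ∩ U = (fun z => t + z) '' (D ∩ ((fun z => t + z) ⁻¹' U)) :=
    (Set.image_inter_preimage _ _ _).symm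
  rw [key, Cardinal.mk_image_eq (add_right_injective t)]
  refine hD _ (hU.preimage (continuous_add_left t)) ?_
  obtain ⟨u, hu⟩ := hne
  exact ⟨-t + u, by simpa using hu⟩

end Helpers

theorem partition_into_nonhomeomorphic_kappa_dense_sets_in_ideal
    (P : Type*) [TopologicalSpace P] [PolishSpace P] [AddCommGroup P]
    [IsTopologicalAddGroup P] [Uncountable P]
    (hP : {x : P | IsOfFinAddOrder x}.Countable ∨
      ∃ e : P ≃+ CantorGroup, Continuous e ∧ Continuous e.symm)
    (κ : Cardinal) (hκ : Cardinal.aleph0 ≤ κ) (hbig : Cardinal.continuum < 2 ^ κ)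
    (L : Set (Set P))
    (hLsub : ∀ A ∈ L, ∀ B ⊆ A, B ∈ L)
    (hLsigma : ∀ f : ℕ → Set P, (∀ n, f n ∈ L) → (⋃ n, f n) ∈ L)
    (hLtrans : ∀ A ∈ L, ∀ t : P, (fun x => t + x) '' A ∈ L)
    (hLopen : ∀ U : Set P, IsOpen U → U.Nonempty →
      ∃ A ∈ L, A ⊆ U ∧ Cardinal.mk A = κ) :
    ∃ Part : Set (Set P), Cardinal.mk Part = Cardinal.continuum ∧
      Part.PairwiseDisjoint id ∧ ⋃₀ Part = Set.univ ∧
      (∀ A ∈ Part, A ∈ L ∧ IsKappaDense κ A) ∧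
      ∀ A ∈ Part, ∀ B ∈ Part, A ≠ B → IsEmpty (↥A ≃ₜ ↥B) := by
  classical
  clear hP
  have hPc : #P = Cardinal.continuum :=
    le_antisymm (mk_le_continuum_of_secondCountable P) (continuum_le_mk_of_uncountable P)
  have hPinf : Cardinal.aleph0 ≤ #P := hPc ▸ Cardinal.aleph0_le_continuum
  have hκ0 : κ ≠ 0 := (Cardinal.aleph0_pos.trans_le hκ).ne'
  -- κ ≤ #P
  obtain ⟨A0, hA0L, -, hA0κ⟩ := hLopen univ isOpen_univ (by
    obtain ⟨a⟩ := (inferInstance : Nonempty P); exact ⟨a, trivial⟩)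
  have hκP : κ ≤ #P := hA0κ ▸ Cardinal.mk_le_mk_of_subset (Set.subset_univ _) |>.trans_eq (by simp)
  -- singletons in L
  have hsing : ∀ y : P, {y} ∈ L := by
    obtain ⟨a⟩ := Cardinal.mk_ne_zero_iff.mp (show #↥A0 ≠ 0 by rw [hA0κ]; exact hκ0)
    intro y
    have h1 : {(a : P)} ∈ L := hLsub A0 hA0L _ (by simpa using a.2)
    have h2 := hLtrans _ h1 (y - (a : P))
    simpa [Set.image_singleton, sub_add_cancel] using h2
  -- binary unions in L
  have hLun : ∀ A ∈ L, ∀ B ∈ L, A ∪ B ∈ L := by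
    intro A hA B hB
    have he : A ∪ B = ⋃ n : ℕ, (if n = 0 then A else B) := by
      ext p
      simp only [Set.mem_iUnion, Set.mem_union]
      constructor
      · rintro (h | h)
        · exact ⟨0, by simpa using h⟩
        · exact ⟨1, by simpa using h⟩
      · rintro ⟨n, hn⟩
        by_cases h0 : n = 0
        · left; simpa [h0] using hn
        · right; simpa [h0] using hn
    rw [he]
    exact hLsigma _ (fun n => by by_cases h0 : n = 0 <;> simp [h0] <;> assumption)
  -- countable basis of nonempty open sets
  obtain ⟨Un, hUo, hUne, hUbasis⟩ :
      ∃ Un : ℕ → Set P, (∀ n, IsOpen (Un n)) ∧ (∀ n, (Un n).Nonempty) ∧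
        (∀ U : Set P, IsOpen U → U.Nonempty → ∃ n, Un n ⊆ U) := by
    have hbasis := TopologicalSpace.isBasis_countableBasis P
    have hcount : {b ∈ TopologicalSpace.countableBasis P | b.Nonempty}.Countable :=
      (TopologicalSpace.countable_countableBasis P).mono (Set.sep_subset _ _)
    have hne : {b ∈ TopologicalSpace.countableBasis P | b.Nonempty}.Nonempty := by
      obtain ⟨a⟩ := (inferInstance : Nonempty P)
      obtain ⟨b, hb, hab, -⟩ := hbasis.exists_subset_of_mem_open (Set.mem_univ a) isOpen_univ
      exact ⟨b, hb, a, hab⟩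
    obtain ⟨f, hf⟩ := Set.Countable.exists_eq_range hcount hne
    refine ⟨f, ?_, ?_, ?_⟩
    · intro n
      have : f n ∈ {b ∈ TopologicalSpace.countableBasis P | b.Nonempty} := by
        rw [hf]; exact ⟨n, rfl⟩
      exact TopologicalSpace.isOpen_of_mem_countableBasis this.1
    · intro n
      have : f n ∈ {b ∈ TopologicalSpace.countableBasis P | b.Nonempty} := by
        rw [hf]; exact ⟨n, rfl⟩
      exact this.2
    · intro U hU ⟨a, ha⟩
      obtain ⟨b, hb, hab, hbU⟩ := hbasis.exists_subset_of_mem_open ha hU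
      have : b ∈ {b ∈ TopologicalSpace.countableBasis P | b.Nonempty} := ⟨hb, a, hab⟩
      rw [hf] at this
      obtain ⟨n, rfl⟩ := this
      exact ⟨n, hbU⟩
  -- choose κ-sized L-sets in each basic open
  choose An hAnL hAnsub hAnκ using fun n => hLopen (Un n) (hUo n) (hUne n)
  -- density criterion
  have kdense_of : ∀ S : Set P, #↥S ≤ κ → (∀ n, κ ≤ #↥(S ∩ Un n)) → IsKappaDense κ S := by
    intro S h1 h2 U hU hUn
    obtain ⟨n, hn⟩ := hUbasis U hU hUn
    refine le_antisymm ((Cardinal.mk_le_mk_of_subset Set.inter_subset_left).trans h1) ?_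
    exact (h2 n).trans (Cardinal.mk_le_mk_of_subset (fun p hp => ⟨hp.1, hn hp.2⟩))
  -- index well-order of length continuum
  obtain ⟨pt⟩ := (inferInstance : Nonempty P)
  set ι := ((#P).ord).ToType with hιdef
  have hι : #ι = #P := by rw [Cardinal.mk_toType, Cardinal.card_ord]
  obtain ⟨x⟩ : Nonempty (ι ≃ P) := Cardinal.eq.mp hι
  have hIio : ∀ i : ι, #(Set.Iio i) < #P := fun i => Cardinal.mk_Iio_ord_toType i
  set Xprev : ι → Set P := fun i => x '' (Set.Iio i) with hXdef
  have hXprev : ∀ i, #(Xprev i) < #P := fun i =>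
    lt_of_le_of_lt Cardinal.mk_image_le (hIio i)
  -- reserved disjoint regions with fresh dense cores and side sets
  obtain ⟨Res, Bf, Zf, hResD, hspec⟩ :
      ∃ (Res Bf Zf : ι → Set P),
        (Pairwise fun i j => Disjoint (Res i) (Res j)) ∧
        (∀ i, Bf i ∈ L ∧ IsKappaDense κ (Bf i) ∧ Zf i ∈ L ∧ #↥(Zf i) = κ ∧
          Bf i ∪ Zf i ⊆ Res i ∧ (Bf i ∪ Zf i) ∩ Xprev i = ∅ ∧ Disjoint (Bf i) (Zf i)) := by
    rcases lt_or_eq_of_le hκP with hlt | heq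
    · -- Case κ < #P : construction by translation
      set D : Set P := ⋃ n, An n with hDdef
      have hDL : D ∈ L := hLsigma An hAnL
      have hDiso : D = ⋃ m : ULift.{_} ℕ, An m.down := by
        ext q
        constructor
        · rintro ⟨Uq, ⟨n, rfl⟩, hq⟩
          exact Set.mem_iUnion.mpr ⟨ULift.up n, hq⟩
        · rintro ⟨Uq, ⟨m, rfl⟩, hq⟩
          exact Set.mem_iUnion.mpr ⟨m.down, hq⟩
      have hDub : #↥D ≤ κ := by
        rw [hDiso]
        refine (Cardinal.mk_iUnion_le _).trans ?_
        have h2 : ⨆ m : ULift.{_} ℕ, #↥(An m.down) ≤ κ := ciSup_le' fun m => (hAnκ m.down).le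
        calc #(ULift.{_} ℕ) * ⨆ m : ULift.{_} ℕ, #↥(An m.down) ≤ Cardinal.aleph0 * κ := by
              rw [Cardinal.mk_uLift, Cardinal.mk_nat, Cardinal.lift_aleph0]
              exact mul_le_mul' le_rfl h2
          _ = κ := by rw [Cardinal.mul_eq_max (le_refl _) hκ, max_eq_right hκ]
      have hDκ : #↥D = κ := le_antisymm hDub
        (by rw [← hAnκ 0]; exact Cardinal.mk_le_mk_of_subset (Set.subset_iUnion An 0))
      have hDd : IsKappaDense κ D := by
        refine kdense_of D hDub (fun n => ?_)
        rw [← hAnκ n]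
        exact Cardinal.mk_le_mk_of_subset
          (fun q hq => ⟨Set.subset_iUnion An n hq, hAnsub n hq⟩)
      have hDne : D.Nonempty := by
        rw [← Set.nonempty_coe_sort, ← Cardinal.mk_ne_zero_iff, hDκ]; exact hκ0
      -- a disjoint translate
      have hDD : #↥(Set.image2 (fun a b => a - b) D D) < #P :=
        lt_of_le_of_lt (Cardinal.mk_image2_le.trans
          (by rw [hDκ]; exact (Cardinal.mul_eq_self hκ).le)) hlt
      obtain ⟨ts, hts⟩ := exists_not_mem_of_mk_lt hDD
      set Zs : Set P := (fun z => ts + z) '' D with hZsdef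
      have hZsL : Zs ∈ L := hLtrans D hDL ts
      have hZsκ : #↥Zs = κ := by
        rw [hZsdef, Cardinal.mk_image_eq (add_right_injective ts), hDκ]
      have hDZs : Disjoint D Zs := by
        rw [Set.disjoint_right]
        rintro q ⟨d, hd, rfl⟩ hqD
        exact hts ⟨ts + d, hqD, d, hd, by simp⟩
      set R : Set P := D ∪ Zs with hRdef
      have hRκ : #↥R ≤ κ := (Cardinal.mk_union_le _ _).trans
        (by rw [hDκ, hZsκ]; exact (Cardinal.add_eq_self hκ).le)
      have hRlt : #↥R < #P := lt_of_le_of_lt hRκ hlt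
      have hRne : R.Nonempty := hDne.mono Set.subset_union_left
      -- pairwise disjoint translates of R
      have hC2 : ∀ (k : ι) (g : Set.Iio k → P),
          ({t : P | ∀ j : Set.Iio k,
            ((fun z => t + z) '' R) ∩ ((fun z => g j + z) '' R) = ∅} : Set P).Nonempty := by
        intro k g
        have hbad : #↥(⋃ j : Set.Iio k, Set.image2 (fun r2 r1 => g j + r2 - r1) R R) < #P := by
          have h2 : ⨆ j : Set.Iio k, #↥(Set.image2 (fun r2 r1 => g j + r2 - r1) R R) ≤ κ :=
            ciSup_le' fun j => Cardinal.mk_image2_le.trans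
              (by rw [← Cardinal.mul_eq_self hκ]; exact mul_le_mul' hRκ hRκ)
          refine lt_of_le_of_lt (Cardinal.mk_iUnion_le _) ?_
          exact lt_of_le_of_lt (mul_le_mul' le_rfl h2)
            (Cardinal.mul_lt_of_lt hPinf (hIio k) hlt)
        obtain ⟨t, ht⟩ := exists_not_mem_of_mk_lt hbad
        refine ⟨t, fun j => ?_⟩
        rw [Set.eq_empty_iff_forall_notMem]
        rintro q ⟨⟨r1, hr1, rfl⟩, ⟨r2, hr2, hqe⟩⟩
        exact ht (Set.mem_iUnion.mpr ⟨j, r2, hr2, r1, hr1, by show g j + r2 - r1 = t; rw [show (g j + r2 : P) = t + r1 from hqe, add_sub_cancel_right]⟩)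
      obtain ⟨t, ht⟩ := recChoice _ hC2
      have htd : ∀ k j : ι, j ≠ k →
          ((fun z => t k + z) '' R) ∩ ((fun z => t j + z) '' R) = ∅ := by
        intro k j hjk
        rcases lt_or_gt_of_ne hjk with h | h
        · exact ht k ⟨j, h⟩
        · rw [Set.inter_comm]; exact ht j ⟨k, h⟩
      have htinj : Function.Injective t := by
        intro a b hab
        by_contra hne'
        obtain ⟨r, hr⟩ := hRne
        have : t a + r ∈ ((fun z => t a + z) '' R) ∩ ((fun z => t b + z) '' R) :=
          ⟨⟨r, hr, rfl⟩, ⟨r, hr, by rw [hab]⟩⟩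
        rw [htd a b (Ne.symm hne')] at this
        exact this
      obtain ⟨e⟩ : Nonempty (ι ≃ ι × ι) := by
        refine Cardinal.eq.mp ?_
        simp only [Cardinal.mk_prod, Cardinal.lift_id]
        rw [hι, Cardinal.mul_eq_self hPinf]
      have hgood : ∀ i : ι, ∃ ξ : ι,
          ((fun z => t (e.symm (i, ξ)) + z) '' R) ∩ Xprev i = ∅ := by
        intro i
        set bad2 : Set ι :=
          {ξ | (((fun z => t (e.symm (i, ξ)) + z) '' R) ∩ Xprev i).Nonempty} with hbad2
        have hψ : Function.Injective
            (fun ξ : ↥bad2 => t (e.symm (i, (ξ : ι)))) := by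
          intro a b hab
          have := htinj hab
          have := e.symm.injective this
          exact Subtype.ext (congrArg Prod.snd this)
        have hb2 : #↥bad2 ≤ #↥(Set.image2 (fun q r => q - r) (Xprev i) R) := by
          refine Cardinal.mk_le_of_injective (f := fun ξ : ↥bad2 =>
            (⟨t (e.symm (i, (ξ : ι))), ?_⟩ : ↥(Set.image2 (fun q r => q - r) (Xprev i) R))) ?_
          · obtain ⟨y, ⟨r, hr, hyr⟩, hyX⟩ := ξ.2
            exact ⟨y, hyX, r, hr, by simp [← hyr]⟩
          · intro a b hab
            exact hψ (congrArg Subtype.val hab)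
        have hb3 : #↥bad2 < #ι := by
          rw [hι]
          exact lt_of_le_of_lt (hb2.trans Cardinal.mk_image2_le)
            (Cardinal.mul_lt_of_lt hPinf (hXprev i) hRlt)
        obtain ⟨ξ, hξ⟩ := exists_not_mem_of_mk_lt hb3
        refine ⟨ξ, ?_⟩
        by_contra hne'
        exact hξ (hbad2 ▸ Set.nonempty_iff_ne_empty.mpr hne')
      choose ξg hξg using hgood
      refine ⟨fun i => ⋃ ξ : ι, ((fun z => t (e.symm (i, ξ)) + z) '' R),
        fun i => (fun z => t (e.symm (i, ξg i)) + z) '' D,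
        fun i => (fun z => t (e.symm (i, ξg i)) + z) '' Zs, ?_, ?_⟩
      · intro i i' hii'
        rw [Set.disjoint_left]
        rintro q hq hq'
        obtain ⟨Uq, ⟨ξ, rfl⟩, hqU⟩ := hq
        obtain ⟨Uq', ⟨ξ', rfl⟩, hqU'⟩ := hq'
        have hne2 : e.symm (i', ξ') ≠ e.symm (i, ξ) := by
          intro h
          have h3 := congrArg Prod.fst (e.symm.injective h)
          simp only [] at h3
          exact hii' h3.symm
        have := htd (e.symm (i, ξ)) (e.symm (i', ξ')) hne2
        rw [Set.eq_empty_iff_forall_notMem] at this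
        exact this q ⟨hqU, hqU'⟩
      · intro i
        set tt := t (e.symm (i, ξg i)) with htt
        have himg : ((fun z => tt + z) '' D) ∪ ((fun z => tt + z) '' Zs) =
            (fun z => tt + z) '' R := (Set.image_union _ _ _).symm
        refine ⟨hLtrans D hDL tt, isKappaDense_translate hDd tt, hLtrans Zs hZsL tt, ?_, ?_, ?_, ?_⟩
        · rw [Cardinal.mk_image_eq (add_right_injective tt), hZsκ]
        · rw [himg]
          exact Set.subset_iUnion
            (fun ξ : ι => ((fun z => t (e.symm (i, ξ)) + z) '' R)) (ξg i)
        · rw [himg]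
          exact hξg i
        · exact (Set.disjoint_image_iff (add_right_injective tt)).mpr hDZs
    · -- Case κ = #P : construction by splitting
      obtain ⟨e2⟩ : Nonempty (ι ≃ (ι × ULift.{_} (ℕ × Bool)) × ι) := by
        have hcard : #((ι × ULift.{_} (ℕ × Bool)) × ι) = #ι := by
          simp only [Cardinal.mk_prod, Cardinal.lift_id]
          rw [hι, Cardinal.mk_eq_aleph0 (ULift (ℕ × Bool)),
            Cardinal.mul_eq_max hPinf le_rfl, max_eq_left hPinf,
            Cardinal.mul_eq_self hPinf]
        exact Cardinal.eq.mp hcard.symm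
      set cI : ι → ι := fun k => (e2 k).1.1 with hcI
      set cN : ι → ℕ := fun k => (e2 k).1.2.down.1 with hcN
      set cB : ι → Bool := fun k => (e2 k).1.2.down.2 with hcB
      have hC3 : ∀ (k : ι) (g : Set.Iio k → P),
          ({q : P | q ∈ An (cN k) ∧ ∀ j : Set.Iio k, q ≠ g j} : Set P).Nonempty := by
        intro k g
        have hV : #↥(Set.range (fun j : Set.Iio k => g j)) < #↥(An (cN k)) := by
          rw [hAnκ (cN k), heq]
          exact lt_of_le_of_lt Cardinal.mk_range_le (hIio k)
        obtain ⟨q, hq1, hq2⟩ := exists_mem_diff_of_mk_lt hV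
        exact ⟨q, hq1, fun j hj => hq2 ⟨j, hj.symm⟩⟩
      obtain ⟨p, hp⟩ := recChoice _ hC3
      have hpA : ∀ k, p k ∈ An (cN k) := fun k => (hp k).1
      have hpne : ∀ k : ι, ∀ j : Set.Iio k, p k ≠ p (j : ι) := fun k => (hp k).2
      have hpinj : Function.Injective p := by
        intro a b hab
        by_contra hne'
        rcases lt_or_gt_of_ne hne' with h | h
        · exact hpne b ⟨a, h⟩ hab.symm
        · exact hpne a ⟨b, h⟩ hab
      set Fib : ι → ℕ → Bool → Set P := fun i n b =>
        Set.range (fun ξ : ι => p (e2.symm ((i, ULift.up (n, b)), ξ))) with hFibdef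
      have hFibmk : ∀ i n b, #↥(Fib i n b) = #P := by
        intro i n b
        have hinj : Function.Injective (fun ξ : ι => p (e2.symm ((i, ULift.up (n, b)), ξ))) := by
          intro a b' hab
          have h1 := e2.symm.injective (hpinj hab)
          have h2 := congrArg Prod.snd h1
          exact h2
        rw [show Fib i n b = Set.range (fun ξ : ι => p (e2.symm ((i, ULift.up (n, b)), ξ)))
          from rfl, Cardinal.mk_range_eq _ hinj, hι]
      have hFibc : ∀ i n b (k : ι), (∃ ξ : ι, p (e2.symm ((i, ULift.up (n, b)), ξ)) = p k) →
          cI k = i ∧ cN k = n ∧ cB k = b := by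
        intro i n b k ⟨ξ, hξ⟩
        have h1 := hpinj hξ
        rw [← h1]
        refine ⟨?_, ?_, ?_⟩
        · show (e2 (e2.symm _)).1.1 = i
          rw [Equiv.apply_symm_apply]
        · show (e2 (e2.symm _)).1.2.down.1 = n
          rw [Equiv.apply_symm_apply]
        · show (e2 (e2.symm _)).1.2.down.2 = b
          rw [Equiv.apply_symm_apply]
      have hFibsub : ∀ i n b, Fib i n b ⊆ (p '' {k | cI k = i ∧ cB k = b}) ∩ An n := by
        rintro i n b q ⟨ξ, rfl⟩
        have hc := hFibc i n b (e2.symm ((i, ULift.up (n, b)), ξ)) ⟨ξ, rfl⟩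
        constructor
        · exact ⟨e2.symm ((i, ULift.up (n, b)), ξ), ⟨hc.1, hc.2.2⟩, rfl⟩
        · have := hpA (e2.symm ((i, ULift.up (n, b)), ξ))
          rwa [hc.2.1] at this
      have hpoolL : ∀ (i : ι) (b : Bool), p '' {k | cI k = i ∧ cB k = b} ∈ L := by
        intro i b
        refine hLsub _ (hLsigma An hAnL) _ ?_
        rintro q ⟨k, -, rfl⟩
        exact Set.mem_iUnion.mpr ⟨cN k, hpA k⟩
      have hpooldisj : ∀ (i i' : ι) (b b' : Bool), (i, b) ≠ (i', b') →
          Disjoint (p '' {k | cI k = i ∧ cB k = b}) (p '' {k | cI k = i' ∧ cB k = b'}) := by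
        intro i i' b b' hne'
        rw [Set.disjoint_image_iff hpinj, Set.disjoint_left]
        rintro k ⟨hk1, hk2⟩ ⟨hk3, hk4⟩
        exact hne' (by rw [← hk1, ← hk2, hk3, hk4])
      have hpoolmkd : ∀ (i : ι) (b : Bool) (n : ℕ),
          κ ≤ #↥((p '' {k | cI k = i ∧ cB k = b} \ Xprev i) ∩ Un n) := by
        intro i b n
        have hsub2 : Fib i n b \ Xprev i ⊆ (p '' {k | cI k = i ∧ cB k = b} \ Xprev i) ∩ Un n := by
          rintro q ⟨hq1, hq2⟩
          obtain ⟨hq3, hq4⟩ := hFibsub i n b hq1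
          exact ⟨⟨hq3, hq2⟩, hAnsub n hq4⟩
        refine le_trans ?_ (Cardinal.mk_le_mk_of_subset hsub2)
        rw [mk_diff_eq_of_mk_lt (by rw [hFibmk i n b]; exact hPinf)
          (by rw [hFibmk i n b]; exact hXprev i), hFibmk i n b, heq]
      refine ⟨fun i => (p '' {k | cI k = i ∧ cB k = false}) ∪
          (p '' {k | cI k = i ∧ cB k = true}),
        fun i => (p '' {k | cI k = i ∧ cB k = false}) \ Xprev i,
        fun i => (p '' {k | cI k = i ∧ cB k = true}) \ Xprev i, ?_, ?_⟩
      · intro i i' hii'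
        have hd : ∀ b b' : Bool, Disjoint (p '' {k | cI k = i ∧ cB k = b})
            (p '' {k | cI k = i' ∧ cB k = b'}) :=
          fun b b' => hpooldisj i i' b b' (fun h => hii' (congrArg Prod.fst h))
        rw [Set.disjoint_union_left]
        constructor <;> (rw [Set.disjoint_union_right]; exact ⟨hd _ _, hd _ _⟩)
      · intro i
        refine ⟨hLsub _ (hpoolL i false) _ Set.diff_subset, ?_, hLsub _ (hpoolL i true) _
          Set.diff_subset, ?_, ?_, ?_, ?_⟩
        · refine kdense_of _ ((Cardinal.mk_set_le _).trans_eq heq.symm) (fun n => ?_)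
          exact hpoolmkd i false n
        · refine le_antisymm ((Cardinal.mk_set_le _).trans_eq heq.symm) ?_
          refine le_trans (hpoolmkd i true 0) (Cardinal.mk_le_mk_of_subset ?_)
          exact fun q hq => hq.1
        · exact Set.union_subset_union Set.diff_subset Set.diff_subset
        · rw [Set.eq_empty_iff_forall_notMem]
          rintro q ⟨(hq | hq), hqX⟩
          · exact hq.2 hqX
          · exact hq.2 hqX
        · exact Disjoint.mono Set.diff_subset Set.diff_subset
            (hpooldisj i i false true (by simp))
  have hBfL : ∀ i, Bf i ∈ L := fun i => (hspec i).1
  have hBfd : ∀ i, IsKappaDense κ (Bf i) := fun i => (hspec i).2.1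
  have hZfL : ∀ i, Zf i ∈ L := fun i => (hspec i).2.2.1
  have hZfκ : ∀ i, #↥(Zf i) = κ := fun i => (hspec i).2.2.2.1
  have hBZRes : ∀ i, Bf i ∪ Zf i ⊆ Res i := fun i => (hspec i).2.2.2.2.1
  have hBZX : ∀ i, (Bf i ∪ Zf i) ∩ Xprev i = ∅ := fun i => (hspec i).2.2.2.2.2.1
  have hBZdisj : ∀ i, Disjoint (Bf i) (Zf i) := fun i => (hspec i).2.2.2.2.2.2
  have hBfκ : ∀ i, #↥(Bf i) = κ := fun i => by
    have := hBfd i univ isOpen_univ ⟨pt, trivial⟩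
    rwa [Set.inter_univ] at this
  -- side sets minus the enumerated point
  set Z' : ι → Set P := fun i => Zf i \ {x i} with hZ'def
  have hZ'κ : ∀ i, #↥(Z' i) = κ := by
    intro i
    have h1 : Cardinal.aleph0 ≤ #↥(Zf i) := (hZfκ i) ▸ hκ
    have h2 : #↥({x i} : Set P) < #↥(Zf i) := by
      rw [Cardinal.mk_singleton, hZfκ i]
      exact lt_of_lt_of_le Cardinal.one_lt_aleph0 hκ
    rw [show Z' i = Zf i \ {x i} from rfl, mk_diff_eq_of_mk_lt h1 h2, hZfκ i]
  -- candidate pieces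
  set cand : ∀ _ : ι, (Set P) → Set P → Set P := fun i W S =>
    Bf i ∪ S ∪ ({x i} \ (W ∪ Bf i ∪ S)) with hcanddef
  have hcandZ : ∀ i W S, S ⊆ Z' i → cand i W S ∩ Z' i = S := by
    intro i W S hSZ
    ext p
    constructor
    · rintro ⟨hp1, hp2⟩
      rcases hp1 with (hB | hS) | hE
      · exact absurd hp2.1 (Set.disjoint_left.mp (hBZdisj i) hB)
      · exact hS
      · exact absurd hE.1 hp2.2
    · intro hp
      exact ⟨Or.inl (Or.inr hp), hSZ hp⟩
  -- the transfinite construction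
  have hC : ∀ (i : ι) (g : Set.Iio i → Set P),
      ({Q | ∃ S, S ⊆ Z' i ∧ Q = cand i (⋃ j : Set.Iio i, g j) S ∧
        ∀ j : Set.Iio i, IsEmpty (↥Q ≃ₜ ↥(g j))} : Set (Set P)).Nonempty := by
    intro i g
    set W := ⋃ j : Set.Iio i, g j with hWdef
    set Φ : Set ↥(Z' i) → Set P := fun T => cand i W (Subtype.val '' T) with hΦdef
    have hΦinj : Function.Injective Φ := by
      intro T T' h
      have e1 : Φ T ∩ Z' i = Subtype.val '' T :=
        hcandZ i W _ (Subtype.coe_image_subset _ _)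
      have e2 : Φ T' ∩ Z' i = Subtype.val '' T' :=
        hcandZ i W _ (Subtype.coe_image_subset _ _)
      have : Subtype.val '' T = Subtype.val '' T' := by rw [← e1, ← e2, h]
      exact Set.image_injective.mpr Subtype.coe_injective this
    set bad : Set (Set ↥(Z' i)) :=
      {T | ∃ j : Set.Iio i, Nonempty (↥(g j) ≃ₜ ↥(Φ T))} with hbaddef
    set BigBad : Set (Set P) :=
      ⋃ j : Set.Iio i, {B : Set P | Nonempty (↥(g j) ≃ₜ ↥B)} with hBBdef
    have hbadle : #↥bad ≤ #↥BigBad := by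
      refine Cardinal.mk_le_of_injective (f := fun T : ↥bad => (⟨Φ T.1, ?_⟩ : ↥BigBad)) ?_
      · obtain ⟨j, hj⟩ := T.2
        exact Set.mem_iUnion.mpr ⟨j, hj⟩
      · intro T T' h
        exact Subtype.ext (hΦinj (congrArg Subtype.val h))
    have hBBle : #↥BigBad ≤ Cardinal.continuum := by
      refine (Cardinal.mk_iUnion_le _).trans ?_
      have h1 : #↥(Set.Iio i) ≤ Cardinal.continuum := by
        rw [← hPc]; exact (hIio i).le
      have h2 : ⨆ j : Set.Iio i, #↥{B : Set P | Nonempty (↥(g j) ≃ₜ ↥B)} ≤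
          Cardinal.continuum :=
        ciSup_le' fun j => mk_homeo_class_le P hPc.le (g j)
      calc #↥(Set.Iio i) * (⨆ j : Set.Iio i, #↥{B : Set P | Nonempty (↥(g j) ≃ₜ ↥B)})
          ≤ Cardinal.continuum * Cardinal.continuum := mul_le_mul' h1 h2
        _ = Cardinal.continuum := Cardinal.mul_eq_self Cardinal.aleph0_le_continuum
    have hfull : #↥bad < #(Set ↥(Z' i)) := by
      rw [Cardinal.mk_set, hZ'κ i]
      exact lt_of_le_of_lt (hbadle.trans hBBle) hbig
    obtain ⟨T, hT⟩ := exists_not_mem_of_mk_lt hfull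
    refine ⟨Φ T, Subtype.val '' T, Subtype.coe_image_subset _ _, rfl, ?_⟩
    intro j
    rw [← not_nonempty_iff]
    intro ⟨h⟩
    exact hT ⟨j, ⟨h.symm⟩⟩
  obtain ⟨piece, hpiece⟩ := recChoice _ hC
  choose Sf hSfZ hpieceEq hnonhomeo using hpiece
  set W : ι → Set P := fun i => ⋃ j : Set.Iio i, piece (j : ι) with hWdef
  have hpieceEq' : ∀ i, piece i = Bf i ∪ Sf i ∪ ({x i} \ (W i ∪ Bf i ∪ Sf i)) :=
    fun i => hpieceEq i
  -- membership in the ideal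
  have hpieceL : ∀ i, piece i ∈ L := by
    intro i
    rw [hpieceEq' i]
    refine hLun _ (hLun _ (hBfL i) _ (hLsub _ (hZfL i) _ ((hSfZ i).trans Set.diff_subset))) _
      (hLsub _ (hsing (x i)) _ Set.diff_subset)
  -- cardinality bounds
  have hpieceκ : ∀ i, #↥(piece i) ≤ κ := by
    intro i
    rw [hpieceEq' i]
    have h1 : #↥(Bf i ∪ Sf i ∪ ({x i} \ (W i ∪ Bf i ∪ Sf i)) : Set P) ≤
        #↥(Bf i) + #↥(Sf i) + #↥({x i} \ (W i ∪ Bf i ∪ Sf i) : Set P) :=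
      (Cardinal.mk_union_le _ _).trans (add_le_add_left (Cardinal.mk_union_le _ _) _)
    have h2 : #↥(Sf i) ≤ κ := by
      rw [← hZ'κ i]; exact Cardinal.mk_le_mk_of_subset (hSfZ i)
    have h3 : #↥({x i} \ (W i ∪ Bf i ∪ Sf i) : Set P) ≤ 1 := by
      rw [← Cardinal.mk_singleton (x i)]
      exact Cardinal.mk_le_mk_of_subset Set.diff_subset
    refine h1.trans ?_
    calc #↥(Bf i) + #↥(Sf i) + #↥({x i} \ (W i ∪ Bf i ∪ Sf i) : Set P)
        ≤ κ + κ + 1 := by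
          exact add_le_add (add_le_add (hBfκ i).le h2) h3
      _ = κ + 1 := by rw [Cardinal.add_eq_self hκ]
      _ = κ := by
          refine le_antisymm ?_ (self_le_add_right _ _)
          calc κ + 1 ≤ κ + κ := add_le_add_right (le_trans (by norm_num)
            (le_trans Cardinal.one_lt_aleph0.le hκ)) _
          _ = κ := Cardinal.add_eq_self hκ
  -- density
  have hpieced : ∀ i, IsKappaDense κ (piece i) := by
    intro i
    refine kdense_of _ (hpieceκ i) ?_
    intro n
    have h1 : Bf i ∩ Un n ⊆ piece i ∩ Un n := by
      intro p hp
      exact ⟨by rw [hpieceEq' i]; exact Or.inl (Or.inl hp.1), hp.2⟩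
    rw [← hBfd i (Un n) (hUo n) (hUne n)]
    exact Cardinal.mk_le_mk_of_subset h1
  -- structural facts
  have hsub : ∀ i, piece i ⊆ Res i ∪ {x i} := by
    intro i p hp
    rw [hpieceEq' i] at hp
    rcases hp with (hB | hS) | hE
    · exact Or.inl (hBZRes i (Or.inl hB))
    · exact Or.inl (hBZRes i (Or.inr ((hSfZ i hS).1)))
    · exact Or.inr hE.1
  have hcoreX : ∀ i, (Bf i ∪ Sf i) ∩ Xprev i = ∅ := by
    intro i
    rw [Set.eq_empty_iff_forall_notMem]
    rintro p ⟨hp1, hp2⟩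
    have : p ∈ (Bf i ∪ Zf i) ∩ Xprev i := by
      rcases hp1 with h | h
      · exact ⟨Or.inl h, hp2⟩
      · exact ⟨Or.inr (hSfZ i h).1, hp2⟩
    rw [hBZX i] at this
    exact this
  -- pairwise disjointness
  have hdisj : ∀ i j : ι, j < i → piece i ∩ piece j = ∅ := by
    intro i j hj
    rw [Set.eq_empty_iff_forall_notMem]
    rintro p ⟨hpi, hpj⟩
    rw [hpieceEq' i] at hpi
    rcases hpi with hcore | hE
    · have hpRes : p ∈ Res j ∪ {x j} := hsub j hpj
      rcases hpRes with hR | hx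
      · have hpResi : p ∈ Res i := by
          rcases hcore with h | h
          · exact hBZRes i (Or.inl h)
          · exact hBZRes i (Or.inr ((hSfZ i h).1))
        exact Set.disjoint_left.mp (hResD (fun h => absurd h (ne_of_gt hj))) hpResi hR
      · have hpX : p ∈ Xprev i := ⟨j, hj, hx.symm ▸ rfl⟩
        have : p ∈ (Bf i ∪ Sf i) ∩ Xprev i := ⟨hcore, hpX⟩
        rw [hcoreX i] at this
        exact this
    · exact hE.2 (Or.inl (Or.inl (Set.mem_iUnion.mpr ⟨⟨j, hj⟩, hpj⟩)))
  -- covering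
  have hcover : ∀ p : P, ∃ i, p ∈ piece i := by
    intro p
    set i := x.symm p with hidef
    have hpx : p = x i := by rw [hidef, Equiv.apply_symm_apply]
    by_cases hprev : ∃ j : Set.Iio i, p ∈ piece (j : ι)
    · obtain ⟨j, hj⟩ := hprev
      exact ⟨j, hj⟩
    · by_cases hcore : p ∈ Bf i ∪ Sf i
      · refine ⟨i, ?_⟩
        rw [hpieceEq' i]
        rcases hcore with h | h
        · exact Or.inl (Or.inl h)
        · exact Or.inl (Or.inr h)
      · refine ⟨i, ?_⟩
        rw [hpieceEq' i]
        refine Or.inr ⟨hpx ▸ rfl, ?_⟩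
        rintro ((hW | hB) | hS)
        · obtain ⟨j, hj⟩ := Set.mem_iUnion.mp hW
          exact hprev ⟨j, hj⟩
        · exact hcore (Or.inl hB)
        · exact hcore (Or.inr hS)
  -- nonemptiness and injectivity
  have hne : ∀ i, (piece i).Nonempty := by
    intro i
    have : (Bf i).Nonempty := by
      rw [← Set.nonempty_coe_sort, ← Cardinal.mk_ne_zero_iff, hBfκ i]
      exact hκ0
    obtain ⟨b, hb⟩ := this
    exact ⟨b, by rw [hpieceEq' i]; exact Or.inl (Or.inl hb)⟩
  have hinj : Function.Injective piece := by
    intro i j h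
    by_contra hij
    rcases lt_or_gt_of_ne hij with hlt | hlt
    · obtain ⟨q, hq⟩ := hne i
      have : q ∈ piece j ∩ piece i := ⟨h ▸ hq, hq⟩
      rw [hdisj j i hlt] at this
      exact this
    · obtain ⟨q, hq⟩ := hne i
      have : q ∈ piece i ∩ piece j := ⟨hq, h ▸ hq⟩
      rw [hdisj i j hlt] at this
      exact this
  -- non-homeomorphy in both directions
  have hnh : ∀ i j : ι, i ≠ j → IsEmpty (↥(piece i) ≃ₜ ↥(piece j)) := by
    intro i j hij
    rcases lt_or_gt_of_ne hij with hlt | hlt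
    · have := hnonhomeo j ⟨i, hlt⟩
      exact ⟨fun h => this.false h.symm⟩
    · exact hnonhomeo i ⟨j, hlt⟩
  -- assemble
  refine ⟨Set.range piece, ?_, ?_, ?_, ?_, ?_⟩
  · rw [Cardinal.mk_range_eq piece hinj, hι, hPc]
  · rintro A ⟨i, rfl⟩ B ⟨j, rfl⟩ hAB
    have hij : i ≠ j := fun h => hAB (by rw [h])
    rcases lt_or_gt_of_ne hij with hlt | hlt
    · exact Set.disjoint_iff_inter_eq_empty.mpr (by rw [Set.inter_comm]; exact hdisj j i hlt)
    · exact Set.disjoint_iff_inter_eq_empty.mpr (hdisj i j hlt)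
  · rw [Set.eq_univ_iff_forall]
    intro p
    obtain ⟨i, hi⟩ := hcover p
    exact ⟨piece i, ⟨i, rfl⟩, hi⟩
  · rintro A ⟨i, rfl⟩
    exact ⟨hpieceL i, hpieced i⟩
  · rintro A ⟨i, rfl⟩ B ⟨j, rfl⟩ hAB
    exact hnh i j (fun h => hAB (by rw [h]))
end
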